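/- For any simplicial group G, the Kan classifying simplicial set W̄G and the diagonal of the dimensionwise nerve Diag NG are simplicially homotopy equivalent, via the mutually inverse homotopy equivalences D_G and S_G. -/

import Mathlib

namespace Paper

/-- clamped coface map `δ^k : [a] → [b]`. -/
def δOH (k a b : ℕ) : Fin (a+1) →o Fin (b+1) where
  toFun i := ⟨min (if (i:ℕ) < k then (i:ℕ) else (i:ℕ)+1) b, Nat.lt_succ_of_le (Nat.min_le_right _ _)⟩
  monotone' := by
    intro i j hij
    have h : (i:ℕ) ≤ (j:ℕ) := hij
    simp only [Fin.mk_le_mk]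
    split_ifs <;> omega

/-- clamped codegeneracy map `σ^k : [a] → [b]`. -/
def σOH (k a b : ℕ) : Fin (a+1) →o Fin (b+1) where
  toFun i := ⟨min (if (i:ℕ) ≤ k then (i:ℕ) else (i:ℕ)-1) b, Nat.lt_succ_of_le (Nat.min_le_right _ _)⟩
  monotone' := by
    intro i j hij
    have h : (i:ℕ) ≤ (j:ℕ) := hij
    simp only [Fin.mk_le_mk]
    split_ifs <;> omega

/-- `τ^k : [n] → [1]`, sending `[0, n-k]` to `0` and the rest to `1`. -/
def τOH (n k : ℕ) : Fin (n+1) →o Fin 2 where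
  toFun i := if (i:ℕ) + k ≤ n then 0 else 1
  monotone' := by
    intro i j hij
    have h : (i:ℕ) ≤ (j:ℕ) := hij
    dsimp only
    split_ifs with h1 h2 h3
    · exact le_refl _
    · exact Fin.zero_le _
    · exact absurd h3 (by omega)
    · exact le_refl _

/-- application of `θ : [m] → [n]` to a natural number (clamped). -/
def fApp {m n : ℕ} (θ : Fin (m+1) →o Fin (n+1)) (x : ℕ) : ℕ :=
  (θ ⟨min x m, Nat.lt_succ_of_le (Nat.min_le_right _ _)⟩ : Fin (n+1))

theorem fApp_mono {m n : ℕ} (θ : Fin (m+1) →o Fin (n+1)) {x y : ℕ} (h : x ≤ y) :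
    fApp θ x ≤ fApp θ y :=
  Fin.le_def.mp (θ.monotone (Fin.mk_le_mk.mpr (by omega)))

theorem fApp_le {m n : ℕ} (θ : Fin (m+1) →o Fin (n+1)) (x : ℕ) : fApp θ x ≤ n :=
  Nat.lt_succ_iff.mp (Fin.isLt _)

theorem fApp_coe {m n : ℕ} (θ : Fin (m+1) →o Fin (n+1)) (p : Fin (m+1)) :
    fApp θ (p:ℕ) = (θ p : ℕ) := by
  have hp : (⟨min (p:ℕ) m, Nat.lt_succ_of_le (Nat.min_le_right _ _)⟩ : Fin (m+1)) = p :=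
    Fin.ext (show min (p:ℕ) m = (p:ℕ) from by have := p.isLt; omega)
  unfold fApp
  rw [hp]

/-- `Spl_{≤ p}(θ) : [p] → [pθ]`. -/
def splLe {m n : ℕ} (θ : Fin (m+1) →o Fin (n+1)) (p : Fin (m+1)) :
    Fin ((p:ℕ)+1) →o Fin ((θ p : ℕ)+1) where
  toFun i := ⟨fApp θ (i:ℕ), by
    have h1 : fApp θ (i:ℕ) ≤ fApp θ (p:ℕ) := fApp_mono θ (by have := i.isLt; omega)
    have h2 : fApp θ (p:ℕ) = (θ p : ℕ) := fApp_coe θ p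
    omega⟩
  monotone' := by
    intro a b hab
    have h : (a:ℕ) ≤ (b:ℕ) := hab
    simp only [Fin.mk_le_mk]
    exact fApp_mono θ h

/-- `Spl_{≥ p}(θ) : [m-p] → [n-pθ]`. -/
def splGe {m n : ℕ} (θ : Fin (m+1) →o Fin (n+1)) (p : Fin (m+1)) :
    Fin (m - (p:ℕ) + 1) →o Fin (n - (θ p : ℕ) + 1) where
  toFun i := ⟨fApp θ ((i:ℕ) + (p:ℕ)) - (θ p : ℕ), by
    have h1 : fApp θ ((i:ℕ) + (p:ℕ)) ≤ n := fApp_le θ _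
    omega⟩
  monotone' := by
    intro a b hab
    have h : (a:ℕ) ≤ (b:ℕ) := hab
    simp only [Fin.mk_le_mk]
    have := fApp_mono θ (show (a:ℕ) + (p:ℕ) ≤ (b:ℕ) + (p:ℕ) by omega)
    omega

/-- the restriction `θ|_[i]^[j] : [i] → [j]` of `θ` (clamped). -/
def restrictOH {m n : ℕ} (θ : Fin (m+1) →o Fin (n+1)) (i j : ℕ) : Fin (i+1) →o Fin (j+1) where
  toFun k := ⟨min (fApp θ (k:ℕ)) j, Nat.lt_succ_of_le (Nat.min_le_right _ _)⟩
  monotone' := by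
    intro a b hab
    have h : (a:ℕ) ≤ (b:ℕ) := hab
    simp only [Fin.mk_le_mk]
    have := fApp_mono θ h
    omega

/-- ascending product `f a * f (a+1) * ⋯ * f (b-1)`. -/
def aProd {γ : Type*} [Monoid γ] (f : ℕ → γ) (a : ℕ) : ℕ → γ
  | 0 => 1
  | b+1 => if a ≤ b then aProd f a b * f b else 1

/-- descending product `f (b-1) * f (b-2) * ⋯ * f a`. -/
def dProd {γ : Type*} [Monoid γ] (f : ℕ → γ) (a : ℕ) : ℕ → γ
  | 0 => 1
  | b+1 => if a ≤ b then f b * dProd f a b else 1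

end Paper
namespace Paper

/-- A simplicial group, given by levels, structure maps, functoriality,
and levelwise multiplicativity. -/
structure SGrp where
  obj : ℕ → Type
  grp : ∀ n, Group (obj n)
  map : ∀ {m n : ℕ}, (Fin (m+1) →o Fin (n+1)) → obj n → obj m
  map_id : ∀ {n : ℕ} (x : obj n), map OrderHom.id x = x
  map_comp : ∀ {l m n : ℕ} (α : Fin (l+1) →o Fin (m+1)) (β : Fin (m+1) →o Fin (n+1)) (x : obj n),
    map α (map β x) = map (β.comp α) x
  map_mul : ∀ {m n : ℕ} (θ : Fin (m+1) →o Fin (n+1)) (x y : obj n),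
    map θ (x * y) = map θ x * map θ y

attribute [instance] SGrp.grp

namespace SGrp

/-- face `d_k : G_N → G_{N-1}` -/
def face (G : SGrp) (k : ℕ) {N : ℕ} : G.obj N → G.obj (N-1) := G.map (δOH k (N-1) N)

/-- degeneracy `s_k : G_M → G_{M+1}` -/
def deg (G : SGrp) (k : ℕ) {M : ℕ} : G.obj M → G.obj (M+1) := G.map (σOH k (M+1) M)

/-- transport between levels (junk value `1` when levels differ). -/
def gcast (G : SGrp) {a : ℕ} (b : ℕ) (x : G.obj a) : G.obj b := if h : a = b then h ▸ x else 1

/-- descending composite of faces `d_{i+c} d_{i+c-1} ⋯ d_{i+1}`. -/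
def dcomp (G : SGrp) : (i c : ℕ) → {N : ℕ} → G.obj N → G.obj (N - c)
  | _, 0, _, x => x
  | i, c+1, _, x => G.face (i+1) (G.dcomp (i+1) c x)

/-- ascending composite of degeneracies `s_i s_{i+1} ⋯ s_{i+c-1}`. -/
def scomp (G : SGrp) : (i c : ℕ) → {M : ℕ} → G.obj M → G.obj (M + c)
  | _, 0, _, x => x
  | i, c+1, _, x => G.deg (i+c) (G.scomp i c x)

/-- `x ↦ x d_j ⋯ d_{i+1} s_i ⋯ s_{j-1}`, an endomap of `G_N`. -/
def ds (G : SGrp) (i j : ℕ) {N : ℕ} (x : G.obj N) : G.obj N :=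
  G.gcast N (G.scomp i (min (j - i) N) (G.dcomp i (min (j - i) N) x))

/-- `x ↦ x d_j ⋯ d_{i+1} s_i ⋯ s_{n-1} : G_j → G_n`. -/
def dsTo (G : SGrp) (i n : ℕ) {j : ℕ} (x : G.obj j) : G.obj n :=
  G.gcast n (G.scomp i (n - i) (G.gcast i (G.dcomp i (j - i) x)))

/-- the `y_i` of the section `S_G`, defined by descending recursion (with fuel). -/
def yAux (G : SGrp) (n : ℕ) (g : ∀ j : ℕ, G.obj j) : ℕ → ℕ → G.obj n
  | 0, _ => 1
  | fuel+1, i =>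
      aProd (fun j => G.ds i j (G.yAux n g fuel j)⁻¹) (i+1) n *
      dProd (fun j => G.dsTo i n (g j)) i n

/-- `W̄_n G = ∏_{j = n-1}^{0} G_j`. -/
def WbarN (G : SGrp) (n : ℕ) : Type := ∀ j : Fin n, G.obj (j:ℕ)

/-- extension of a tuple in `W̄_n G` by `1`. -/
def gE (G : SGrp) {n : ℕ} (g : G.WbarN n) : ∀ j : ℕ, G.obj j :=
  fun j => if h : j < n then g ⟨j, h⟩ else 1

/-- the coretraction `(S_G)_n : W̄_n G → Diag_n NG = (G_n)^n`. -/
def SGn (G : SGrp) (n : ℕ) (g : G.WbarN n) : Fin n → G.obj n :=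
  fun i => G.yAux n (G.gE g) n (i:ℕ)

/-- extension of a tuple in `(G_n)^n` by `1`. -/
def xE (G : SGrp) {n : ℕ} (x : Fin n → G.obj n) : ℕ → G.obj n :=
  fun j => if h : j < n then x ⟨j, h⟩ else 1

/-- the structure map `W̄_θ : W̄_n G → W̄_m G` of the Kan classifying simplicial set. -/
def wbarMap (G : SGrp) {m n : ℕ} (θ : Fin (m+1) →o Fin (n+1)) (g : G.WbarN n) : G.WbarN m :=
  fun i => dProd (fun j => G.map (restrictOH θ (i:ℕ) j) (G.gE g j))
    ((θ i.castSucc : Fin (n+1)) : ℕ) ((θ i.succ : Fin (n+1)) : ℕ)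

/-- the structure map `(Diag NG)_θ : (G_n)^n → (G_m)^m` of the diagonal of the nerve. -/
def diagMap (G : SGrp) {m n : ℕ} (θ : Fin (m+1) →o Fin (n+1)) (x : Fin n → G.obj n) :
    Fin m → G.obj m :=
  fun i => dProd (fun j => G.map θ (G.xE x j))
    ((θ i.castSucc : Fin (n+1)) : ℕ) ((θ i.succ : Fin (n+1)) : ℕ)

/-- the retraction `(D_G)_n : Diag_n NG → W̄_n G`, `(g_i)_i ↦ (g_i d_n ⋯ d_{i+1})_i`. -/
def DGn (G : SGrp) (n : ℕ) (x : Fin n → G.obj n) : G.WbarN n :=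
  fun i => G.gcast (i:ℕ) (G.dcomp (i:ℕ) (n - (i:ℕ)) (x i))

/-- the components `y_i^{(n+1-k)}` of the homotopy `H`, by descending recursion (with fuel). -/
def hAux (G : SGrp) (n k : ℕ) (g : ℕ → G.obj n) : ℕ → ℕ → G.obj n
  | 0, _ => 1
  | fuel+1, i =>
      if k ≤ i + 1 then g i
      else
        aProd (fun j => G.ds i j (G.hAux n k g fuel j)⁻¹) (i+1) (k-1) *
        dProd (fun j => G.ds i (k-1) (g j)) i (k-1)

end SGrp

/-- recover `k` from the simplex `τ^{n+1-k} ∈ Δ^1_n`: the number of vertices sent to `0`. -/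
def kOf {n : ℕ} (t : Fin (n+1) →o Fin 2) : ℕ :=
  (Finset.univ.filter (fun i => t i = 0)).card

namespace SGrp

/-- the homotopy `H_n : Diag_n NG × Δ^1_n → Diag_n NG`. -/
def Hn (G : SGrp) (n : ℕ) (x : Fin n → G.obj n) (t : Fin (n+1) →o Fin 2) : Fin n → G.obj n :=
  fun i => G.hAux n (kOf t) (G.xE x) (n+1) (i:ℕ)

end SGrp

/-- morphisms of simplicial groups. -/
structure SGrpHom (G G' : SGrp) where
  app : ∀ n, G.obj n → G'.obj n
  comm : ∀ {m n : ℕ} (θ : Fin (m+1) →o Fin (n+1)) (x : G.obj n),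
    app m (G.map θ x) = G'.map θ (app n x)
  mul : ∀ (n : ℕ) (x y : G.obj n), app n (x * y) = app n x * app n y

end Paper
namespace Paper

/-! ### Generic product lemmas -/

section Prod
variable {γ : Type*} [Monoid γ] (f g : ℕ → γ)

theorem aProd_empty {a b : ℕ} (h : b ≤ a) : aProd f a b = 1 := by
  cases b with
  | zero => rfl
  | succ b => exact if_neg (by omega)

theorem dProd_empty {a b : ℕ} (h : b ≤ a) : dProd f a b = 1 := by
  cases b with
  | zero => rfl
  | succ b => exact if_neg (by omega)

theorem aProd_succ {a b : ℕ} (h : a ≤ b) : aProd f a (b+1) = aProd f a b * f b := if_pos h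

theorem dProd_succ {a b : ℕ} (h : a ≤ b) : dProd f a (b+1) = f b * dProd f a b := if_pos h

theorem dProd_single (a : ℕ) : dProd f a (a+1) = f a := by
  rw [dProd_succ f le_rfl, dProd_empty f le_rfl, mul_one]

theorem aProd_congr : ∀ {b a : ℕ}, (∀ j, a ≤ j → j < b → f j = g j) →
    aProd f a b = aProd g a b := by
  intro b
  induction b with
  | zero => intro a _; rfl
  | succ b ih =>
    intro a h
    by_cases hab : a ≤ b
    · rw [aProd_succ f hab, aProd_succ g hab, ih (fun j h1 h2 => h j h1 (by omega)),
        h b hab (by omega)]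
    · rw [aProd_empty f (by omega), aProd_empty g (by omega)]

theorem dProd_congr : ∀ {b a : ℕ}, (∀ j, a ≤ j → j < b → f j = g j) →
    dProd f a b = dProd g a b := by
  intro b
  induction b with
  | zero => intro a _; rfl
  | succ b ih =>
    intro a h
    by_cases hab : a ≤ b
    · rw [dProd_succ f hab, dProd_succ g hab, ih (fun j h1 h2 => h j h1 (by omega)),
        h b hab (by omega)]
    · rw [dProd_empty f (by omega), dProd_empty g (by omega)]

theorem dProd_split : ∀ {c b a : ℕ}, a ≤ b → b ≤ c →
    dProd f a c = dProd f b c * dProd f a b := by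
  intro c
  induction c with
  | zero =>
    intro b a h1 h2
    have hb : b = 0 := by omega
    subst hb
    rw [dProd_empty f (le_refl 0), one_mul]
  | succ c ih =>
    intro b a h1 h2
    by_cases hbc : b ≤ c
    · rw [dProd_succ f (by omega), dProd_succ f hbc, ih h1 hbc, mul_assoc]
    · have : b = c + 1 := by omega
      subst this
      rw [dProd_empty f le_rfl, one_mul]

theorem aProd_cons : ∀ {b a : ℕ}, a < b → aProd f a b = f a * aProd f (a+1) b := by
  intro b
  induction b with
  | zero => intro a h; omega
  | succ b ih =>
    intro a h
    by_cases hab : a < b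
    · rw [aProd_succ f (by omega), aProd_succ f (by omega), ih hab, mul_assoc]
    · have : a = b := by omega
      subst this
      rw [aProd_succ f le_rfl, aProd_empty f le_rfl, aProd_empty f (by omega), one_mul, mul_one]

theorem aProd_shift : ∀ {b a : ℕ}, aProd (fun j => f (j+1)) a b = aProd f (a+1) (b+1) := by
  intro b
  induction b with
  | zero => intro a; rw [aProd_empty _ (by omega), aProd_empty f (by omega)]
  | succ b ih =>
    intro a
    by_cases hab : a ≤ b
    · rw [aProd_succ _ hab, aProd_succ f (by omega), ih]
    · rw [aProd_empty _ (by omega), aProd_empty f (by omega)]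

theorem dProd_shift : ∀ {b a : ℕ}, dProd (fun j => f (j+1)) a b = dProd f (a+1) (b+1) := by
  intro b
  induction b with
  | zero => intro a; rw [dProd_empty _ (by omega), dProd_empty f (by omega)]
  | succ b ih =>
    intro a
    by_cases hab : a ≤ b
    · rw [dProd_succ _ hab, dProd_succ f (by omega), ih]
    · rw [dProd_empty _ (by omega), dProd_empty f (by omega)]

theorem dProd_glue (ψ : ℕ → ℕ) (hψ : ∀ u v, u ≤ v → ψ u ≤ ψ v) :
    ∀ {b a : ℕ}, a ≤ b → dProd (fun u => dProd f (ψ u) (ψ (u+1))) a b = dProd f (ψ a) (ψ b) := by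
  intro b
  induction b with
  | zero => intro a h
            have : a = 0 := by omega
            subst this
            rw [dProd_empty _ le_rfl, dProd_empty f le_rfl]
  | succ b ih =>
    intro a h
    by_cases hab : a ≤ b
    · rw [dProd_succ _ hab, ih hab, ← dProd_split f (hψ a b hab) (hψ b (b+1) (by omega))]
    · have : a = b + 1 := by omega
      subst this
      rw [dProd_empty _ le_rfl, dProd_empty f le_rfl]

theorem dProd_one {a b : ℕ} : dProd (fun _ => (1 : γ)) a b = 1 := by
  induction b with
  | zero => rfl
  | succ b ih =>
    by_cases hab : a ≤ b
    · rw [dProd_succ _ hab, ih, one_mul]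
    · exact dProd_empty _ (by omega)

end Prod

section ProdGroup
variable {γ : Type*} [Group γ] (f : ℕ → γ)

theorem aProd_inv_mul_dProd {a b : ℕ} : aProd (fun j => (f j)⁻¹) a b * dProd f a b = 1 := by
  induction b with
  | zero => rw [aProd_empty _ (by omega), dProd_empty f (by omega), one_mul]
  | succ b ih =>
    by_cases hab : a ≤ b
    · rw [aProd_succ _ hab, dProd_succ f hab]
      rw [mul_assoc, ← mul_assoc ((f b)⁻¹), inv_mul_cancel, one_mul, ih]
    · rw [aProd_empty _ (by omega), dProd_empty f (by omega), one_mul]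

end ProdGroup

/-! ### Order-hom calculus -/

theorem oh_ext {m n : ℕ} {φ ψ : Fin (m+1) →o Fin (n+1)}
    (h : ∀ v : ℕ, fApp φ v = fApp ψ v) : φ = ψ := by
  refine OrderHom.ext _ _ (funext fun v => Fin.ext ?_)
  rw [← fApp_coe φ v, ← fApp_coe ψ v, h]

theorem fApp_comp {l m n : ℕ} (α : Fin (l+1) →o Fin (m+1)) (β : Fin (m+1) →o Fin (n+1))
    (v : ℕ) : fApp (β.comp α) v = fApp β (fApp α v) := by
  exact (fApp_coe β (α ⟨min v l, Nat.lt_succ_of_le (Nat.min_le_right _ _)⟩)).symm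

/-- collapse `[i, j]` to `i` inside `[N]`. -/
def mOH (i j N : ℕ) : Fin (N+1) →o Fin (N+1) where
  toFun v := ⟨if (v:ℕ) ≤ j then min (v:ℕ) i else (v:ℕ), by have := v.isLt; split <;> omega⟩
  monotone' := by intro a b hab; have : (a:ℕ) ≤ b := hab
                  simp only [Fin.mk_le_mk]; split_ifs <;> omega

/-- clamped inclusion `[a] → [b]`, `v ↦ min v b`. -/
def iOH (a b : ℕ) : Fin (a+1) →o Fin (b+1) where
  toFun v := ⟨min (v:ℕ) b, by omega⟩
  monotone' := by intro a b hab; have : (a:ℕ) ≤ b := hab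
                  simp only [Fin.mk_le_mk]; omega

/-- `v ↦ min v i : [a] → [b]` (clamped). -/
def cOH (i a b : ℕ) : Fin (a+1) →o Fin (b+1) where
  toFun v := ⟨min (min (v:ℕ) i) b, by omega⟩
  monotone' := by intro a b hab; have : (a:ℕ) ≤ b := hab
                  simp only [Fin.mk_le_mk]; omega

/-- composite of cofaces `δ^{i+c} ⋯ δ^{i+1} : [N-c] → [N]`. -/
def dUp (i c N : ℕ) : Fin (N-c+1) →o Fin (N+1) where
  toFun v := ⟨min (if (v:ℕ) ≤ i then (v:ℕ) else (v:ℕ) + c) N, by omega⟩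
  monotone' := by intro a b hab; have : (a:ℕ) ≤ b := hab
                  simp only [Fin.mk_le_mk]; split_ifs <;> omega

/-- composite of codegeneracies `σ^i ⋯ σ^{i+c-1} : [M+c] → [M]`. -/
def sDn (i c M : ℕ) : Fin (M+c+1) →o Fin (M+1) where
  toFun v := ⟨min (if (v:ℕ) ≤ i then (v:ℕ) else if (v:ℕ) ≤ i + c then i else (v:ℕ) - c) M,
    by omega⟩
  monotone' := by intro a b hab; have : (a:ℕ) ≤ b := hab
                  simp only [Fin.mk_le_mk]; split_ifs <;> omega

theorem fApp_mOH (i j N v : ℕ) :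
    fApp (mOH i j N) v = if min v N ≤ j then min (min v N) i else min v N := rfl

theorem fApp_iOH (a b v : ℕ) : fApp (iOH a b) v = min (min v a) b := rfl

theorem fApp_cOH (i a b v : ℕ) : fApp (cOH i a b) v = min (min (min v a) i) b := rfl

theorem fApp_dUp (i c N v : ℕ) :
    fApp (dUp i c N) v = min (if min v (N-c) ≤ i then min v (N-c) else min v (N-c) + c) N := rfl

theorem fApp_sDn (i c M v : ℕ) :
    fApp (sDn i c M) v = min (if min v (M+c) ≤ i then min v (M+c)
      else if min v (M+c) ≤ i + c then i else min v (M+c) - c) M := rfl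

theorem fApp_δOH (k a b v : ℕ) :
    fApp (δOH k a b) v = min (if min v a < k then min v a else min v a + 1) b := rfl

theorem fApp_σOH (k a b v : ℕ) :
    fApp (σOH k a b) v = min (if min v a ≤ k then min v a else min v a - 1) b := rfl

namespace SGrp
variable (G : SGrp)

theorem map_eqOn {m n : ℕ} {φ ψ : Fin (m+1) →o Fin (n+1)}
    (h : ∀ v : ℕ, fApp φ v = fApp ψ v) (x : G.obj n) : G.map φ x = G.map ψ x := by
  rw [oh_ext h]

theorem map_one {m n : ℕ} (θ : Fin (m+1) →o Fin (n+1)) : G.map θ (1 : G.obj n) = 1 := by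
  have h := G.map_mul θ 1 1
  rw [mul_one] at h
  exact (mul_eq_left (a := G.map θ 1)).mp h.symm

theorem map_inv {m n : ℕ} (θ : Fin (m+1) →o Fin (n+1)) (x : G.obj n) :
    G.map θ x⁻¹ = (G.map θ x)⁻¹ := by
  have h : G.map θ x⁻¹ * G.map θ x = 1 := by
    rw [← G.map_mul, inv_mul_cancel, G.map_one]
  exact eq_inv_of_mul_eq_one_left h

theorem map_dProd {m n : ℕ} (θ : Fin (m+1) →o Fin (n+1)) (f : ℕ → G.obj n) (a b : ℕ) :
    G.map θ (dProd f a b) = dProd (fun j => G.map θ (f j)) a b := by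
  induction b with
  | zero => exact G.map_one θ
  | succ b ih =>
    by_cases hab : a ≤ b
    · rw [dProd_succ f hab, dProd_succ _ hab, G.map_mul, ih]
    · rw [dProd_empty f (by omega), dProd_empty _ (by omega), G.map_one]

theorem map_aProd {m n : ℕ} (θ : Fin (m+1) →o Fin (n+1)) (f : ℕ → G.obj n) (a b : ℕ) :
    G.map θ (aProd f a b) = aProd (fun j => G.map θ (f j)) a b := by
  induction b with
  | zero => exact G.map_one θ
  | succ b ih =>
    by_cases hab : a ≤ b
    · rw [aProd_succ f hab, aProd_succ _ hab, G.map_mul, ih]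
    · rw [aProd_empty f (by omega), aProd_empty _ (by omega), G.map_one]

theorem gcast_map {a b c : ℕ} (h : a = b) (x : G.obj c)
    (φ : Fin (a+1) →o Fin (c+1)) (ψ : Fin (b+1) →o Fin (c+1))
    (hfa : ∀ v : ℕ, fApp φ v = fApp ψ v) : G.gcast b (G.map φ x) = G.map ψ x := by
  subst h
  rw [show G.gcast a (G.map φ x) = G.map φ x from dif_pos rfl, G.map_eqOn hfa]

theorem gcast_rfl {a : ℕ} (x : G.obj a) : G.gcast a x = x := dif_pos rfl

end SGrp
end Paper
namespace Paper

theorem fApp_id {n : ℕ} (v : ℕ) : fApp (OrderHom.id : Fin (n+1) →o Fin (n+1)) v = min v n := rfl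

namespace SGrp
variable (G : SGrp)

theorem dcomp_eq : ∀ (c i N : ℕ), i + c ≤ N → ∀ (x : G.obj N),
    G.dcomp i c x = G.map (dUp i c N) x := by
  intro c
  induction c with
  | zero =>
    intro i N h x
    show x = _
    rw [show dUp i 0 N = OrderHom.id from oh_ext (by
      intro v; simp only [fApp_dUp, fApp_id]; split_ifs <;> omega), G.map_id]
  | succ c ih =>
    intro i N h x
    show G.face (i+1) (G.dcomp (i+1) c x) = _
    rw [ih (i+1) N (by omega) x]
    show G.map (δOH (i+1) (N-c-1) (N-c)) _ = _
    rw [G.map_comp]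
    exact G.map_eqOn (fun v => by
      simp only [fApp_comp, fApp_dUp, fApp_δOH]; split_ifs <;> omega) x

theorem scomp_eq : ∀ (c i M : ℕ), i ≤ M → ∀ (x : G.obj M),
    G.scomp i c x = G.map (sDn i c M) x := by
  intro c
  induction c with
  | zero =>
    intro i M h x
    show x = _
    rw [show sDn i 0 M = OrderHom.id from oh_ext (by
      intro v; simp only [fApp_sDn, fApp_id]; split_ifs <;> omega), G.map_id]
  | succ c ih =>
    intro i M h x
    show G.deg (i+c) (G.scomp i c x) = _
    rw [ih i M h x]
    show G.map (σOH (i+c) (M+c+1) (M+c)) _ = _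
    rw [G.map_comp]
    exact G.map_eqOn (fun v => by
      simp only [fApp_comp, fApp_sDn, fApp_σOH]; split_ifs <;> omega) x

theorem ds_eq {i j N : ℕ} (hij : i ≤ j) (hjN : j ≤ N) (x : G.obj N) :
    G.ds i j x = G.map (mOH i j N) x := by
  unfold ds
  have hm : min (j - i) N = j - i := by omega
  rw [hm, G.dcomp_eq (j-i) i N (by omega) x, G.scomp_eq (j-i) i (N-(j-i)) (by omega) _,
    G.map_comp]
  exact G.gcast_map (by omega) x _ _ (fun v => by
    simp only [fApp_comp, fApp_dUp, fApp_sDn, fApp_mOH]; split_ifs <;> omega)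

theorem dsTo_eq {i n j : ℕ} (hij : i ≤ j) (hin : i ≤ n) (x : G.obj j) :
    G.dsTo i n x = G.map (cOH i n j) x := by
  unfold dsTo
  rw [G.dcomp_eq (j-i) i j (by omega) x,
    G.gcast_map (a := j - (j-i)) (by omega) x (dUp i (j-i) j) (iOH i j) (fun v => by
      simp only [fApp_dUp, fApp_iOH]; split_ifs <;> omega),
    G.scomp_eq (n-i) i i le_rfl _, G.map_comp]
  exact G.gcast_map (by omega) x _ _ (fun v => by
    simp only [fApp_comp, fApp_iOH, fApp_sDn, fApp_cOH]; split_ifs <;> omega)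

theorem DGn_eq {n : ℕ} (x : Fin n → G.obj n) (i : Fin n) :
    G.DGn n x i = G.map (iOH (i:ℕ) n) (x i) := by
  unfold DGn
  rw [G.dcomp_eq (n - (i:ℕ)) (i:ℕ) n (by omega) (x i)]
  exact G.gcast_map (by have := i.isLt; omega) (x i) _ _ (fun v => by
    simp only [fApp_dUp, fApp_iOH]; split_ifs <;> omega)

/-! ### hAux / yAux bookkeeping -/

theorem hAux_succ (n k : ℕ) (g : ℕ → G.obj n) (f i : ℕ) :
    G.hAux n k g (f+1) i = if k ≤ i + 1 then g i else
      aProd (fun j => G.ds i j (G.hAux n k g f j)⁻¹) (i+1) (k-1) *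
      dProd (fun j => G.ds i (k-1) (g j)) i (k-1) := by
  rfl

theorem hAux_le {n k : ℕ} {g : ℕ → G.obj n} {f i : ℕ} (hk : k ≤ i + 1) (hf : 1 ≤ f) :
    G.hAux n k g f i = g i := by
  cases f with
  | zero => omega
  | succ f => rw [hAux_succ, if_pos hk]

theorem hAux_step (n k : ℕ) (g : ℕ → G.obj n) :
    ∀ (f i : ℕ), 1 ≤ f → k ≤ i + f + 1 → G.hAux n k g f i = G.hAux n k g (f+1) i := by
  intro f
  induction f with
  | zero => intro i h; omega
  | succ f ih =>
    intro i _ hk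
    by_cases hki : k ≤ i + 1
    · rw [G.hAux_le hki (by omega), G.hAux_le hki (by omega)]
    · rw [hAux_succ, hAux_succ, if_neg hki, if_neg hki]
      congr 1
      refine aProd_congr _ _ (fun j hj1 hj2 => ?_)
      rw [ih j (by omega) (by omega)]

theorem hAux_fuel (n k : ℕ) (g : ℕ → G.obj n) {f1 f2 : ℕ} (i : ℕ)
    (hf1 : 1 ≤ f1) (hk1 : k ≤ i + f1 + 1) (hf2 : 1 ≤ f2) (hk2 : k ≤ i + f2 + 1) :
    G.hAux n k g f1 i = G.hAux n k g f2 i := by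
  have key : ∀ (d f : ℕ), 1 ≤ f → k ≤ i + f + 1 → G.hAux n k g f i = G.hAux n k g (f+d) i := by
    intro d
    induction d with
    | zero => intro f _ _; rfl
    | succ d ih =>
      intro f hf hk
      rw [ih f hf hk, G.hAux_step n k g (f+d) i (by omega) (by omega)]
      rfl
  rcases le_total f1 f2 with h | h
  · rw [key (f2 - f1) f1 hf1 hk1]; congr 1; omega
  · rw [key (f1 - f2) f2 hf2 hk2]; congr 1; omega

/-- canonical-fuel `y^{(k)}_i`. -/
def YY (n k : ℕ) (g : ℕ → G.obj n) (i : ℕ) : G.obj n := G.hAux n k g (n+1) i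

theorem YY_le {n k : ℕ} {g : ℕ → G.obj n} {i : ℕ} (hk : k ≤ i + 1) :
    G.YY n k g i = g i := G.hAux_le hk (by omega)

theorem YY_rec {n k : ℕ} (g : ℕ → G.obj n) {i : ℕ} (hk : k ≤ n + 1) (hik : i + 2 ≤ k) :
    G.YY n k g i = aProd (fun j => (G.map (mOH i j n) (G.YY n k g j))⁻¹) (i+1) (k-1) *
      G.map (mOH i (k-1) n) (dProd g i (k-1)) := by
  have hn : 1 ≤ n := by omega
  show G.hAux n k g (n+1) i = _
  rw [hAux_succ, if_neg (by omega)]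
  congr 1
  · refine aProd_congr _ _ (fun j hj1 hj2 => ?_)
    rw [G.hAux_fuel n k g j (by omega) (by omega) (by omega) (by omega : k ≤ j + (n+1) + 1)]
    rw [G.ds_eq (by omega) (by omega), G.map_inv]
    rfl
  · rw [G.map_dProd]
    refine dProd_congr _ _ (fun j hj1 hj2 => ?_)
    rw [G.ds_eq (by omega) (by omega)]

theorem yAux_succ (n : ℕ) (g : ∀ j : ℕ, G.obj j) (f i : ℕ) :
    G.yAux n g (f+1) i = aProd (fun j => G.ds i j (G.yAux n g f j)⁻¹) (i+1) n *
      dProd (fun j => G.dsTo i n (g j)) i n := by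
  rfl

theorem yAux_big {n : ℕ} {g : ∀ j : ℕ, G.obj j} {f i : ℕ} (hn : n ≤ i) (hf : 1 ≤ f) :
    G.yAux n g f i = 1 := by
  cases f with
  | zero => omega
  | succ f =>
    rw [yAux_succ, aProd_empty _ (by omega), dProd_empty _ (by omega), one_mul]

theorem yAux_step (n : ℕ) (g : ∀ j : ℕ, G.obj j) :
    ∀ (f i : ℕ), n ≤ i + f → G.yAux n g f i = G.yAux n g (f+1) i := by
  intro f
  induction f with
  | zero =>
    intro i h
    show (1 : G.obj n) = _
    rw [G.yAux_big (by omega) (by omega)]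
  | succ f ih =>
    intro i hk
    rw [yAux_succ, yAux_succ]
    congr 1
    refine aProd_congr _ _ (fun j hj1 hj2 => ?_)
    rw [ih j (by omega)]

theorem yAux_fuel (n : ℕ) (g : ∀ j : ℕ, G.obj j) {f1 f2 : ℕ} (i : ℕ)
    (hk1 : n ≤ i + f1) (hk2 : n ≤ i + f2) : G.yAux n g f1 i = G.yAux n g f2 i := by
  have key : ∀ (d f : ℕ), n ≤ i + f → G.yAux n g f i = G.yAux n g (f+d) i := by
    intro d
    induction d with
    | zero => intro f _; rfl
    | succ d ih =>
      intro f hf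
      rw [ih f hf, G.yAux_step n g (f+d) i (by omega)]
      rfl
  rcases le_total f1 f2 with h | h
  · rw [key (f2 - f1) f1 hk1]; congr 1; omega
  · rw [key (f1 - f2) f2 hk2]; congr 1; omega

/-- canonical-fuel section components. -/
def YS (n : ℕ) (g : ∀ j : ℕ, G.obj j) (i : ℕ) : G.obj n := G.yAux n g (n+1) i

theorem YS_rec {n : ℕ} (g : ∀ j : ℕ, G.obj j) {i : ℕ} (hin : i ≤ n) :
    G.YS n g i = aProd (fun j => (G.map (mOH i j n) (G.YS n g j))⁻¹) (i+1) n *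
      dProd (fun j => G.map (cOH i n j) (g j)) i n := by
  show G.yAux n g (n+1) i = _
  rw [yAux_succ]
  congr 1
  · refine aProd_congr _ _ (fun j hj1 hj2 => ?_)
    rw [G.yAux_fuel n g j (by omega) (by omega : n ≤ j + (n+1))]
    rw [G.ds_eq (by omega) (by omega), G.map_inv]
    rfl
  · refine dProd_congr _ _ (fun j hj1 hj2 => ?_)
    rw [G.dsTo_eq (by omega) (by omega)]

end SGrp
end Paper
namespace Paper

theorem card_lt_filter (N c : ℕ) (hc : c ≤ N + 1) :
    (Finset.univ.filter (fun v : Fin (N+1) => (v:ℕ) < c)).card = c := by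
  apply Finset.card_eq_of_bijective (f := fun i hi => (⟨i, by omega⟩ : Fin (N+1)))
  · intro a ha
    rw [Finset.mem_filter] at ha
    exact ⟨(a:ℕ), ha.2, Fin.ext rfl⟩
  · intro i hi
    rw [Finset.mem_filter]
    exact ⟨Finset.mem_univ _, hi⟩
  · intro i j hi hj hij
    exact Fin.mk.inj_iff.mp hij

theorem kOf_le {n : ℕ} (t : Fin (n+1) →o Fin 2) : kOf t ≤ n + 1 := by
  unfold kOf
  calc _ ≤ Finset.univ.card := Finset.card_filter_le _ _
    _ = n + 1 := by simp

theorem t_zero_iff {n : ℕ} (t : Fin (n+1) →o Fin 2) (v : Fin (n+1)) :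
    t v = 0 ↔ (v:ℕ) < kOf t := by
  by_cases hall : ∀ w, t w = 0
  · have : kOf t = n + 1 := by
      unfold kOf
      rw [Finset.filter_true_of_mem (fun x _ => hall x)]
      simp
    rw [this]
    exact ⟨fun _ => v.isLt, fun _ => hall v⟩
  · push_neg at hall
    obtain ⟨w, hw⟩ := hall
    have hne : (Finset.univ.filter (fun u : Fin (n+1) => ¬ t u = 0)).Nonempty :=
      ⟨w, by rw [Finset.mem_filter]; exact ⟨Finset.mem_univ _, hw⟩⟩
    set m := Finset.min' _ hne with hm
    have hmne : ¬ t m = 0 := by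
      have := Finset.min'_mem _ hne
      rw [Finset.mem_filter] at this
      exact this.2
    have hiff : ∀ u : Fin (n+1), t u = 0 ↔ u < m := by
      intro u
      constructor
      · intro hu
        by_contra hum
        apply hmne
        have h2 := t.monotone (not_lt.mp hum)
        rw [hu] at h2
        exact le_antisymm h2 (Fin.zero_le _)
      · intro hum
        by_contra hu
        exact absurd (Finset.min'_le _ u (by rw [Finset.mem_filter]; exact ⟨Finset.mem_univ _, hu⟩))
          (not_le.mpr hum)
    have hcard : kOf t = (m:ℕ) := by
      unfold kOf
      rw [Finset.filter_congr (q := fun v : Fin (n+1) => (v:ℕ) < (m:ℕ))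
        (fun u _ => (hiff u).trans Fin.lt_def)]
      exact card_lt_filter n m (by omega)
    rw [hcard, ← Fin.lt_def]
    exact hiff v

theorem kOf_comp {m n : ℕ} (t : Fin (n+1) →o Fin 2) (θ : Fin (m+1) →o Fin (n+1)) :
    kOf (t.comp θ) = (Finset.univ.filter (fun i : Fin (m+1) => ((θ i : Fin (n+1)) : ℕ) < kOf t)).card := by
  unfold kOf
  congr 1
  refine Finset.filter_congr (fun i _ => ?_)
  rw [show (t.comp θ) i = t (θ i) from rfl]
  exact t_zero_iff t (θ i)

theorem kOf_τOH (n k₀ : ℕ) : kOf (τOH n k₀) = n + 1 - k₀ := by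
  unfold kOf
  rw [Finset.filter_congr (q := fun u : Fin (n+1) => (u:ℕ) < n + 1 - k₀) (fun u _ => by
    show (if (u:ℕ) + k₀ ≤ n then (0 : Fin 2) else 1) = 0 ↔ _
    split_ifs with h
    · simp only [eq_self_iff_true, true_iff]
      omega
    · constructor
      · intro h1; exact absurd h1 (by decide)
      · intro h1; omega)]
  exact card_lt_filter n _ (by omega)

namespace SGrp
variable (G : SGrp)

theorem SGn_eq {n : ℕ} (g : G.WbarN n) (i : Fin n) :
    G.SGn n g i = G.YS n (G.gE g) (i:ℕ) := by
  have := i.isLt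
  exact G.yAux_fuel n (G.gE g) (i:ℕ) (by omega) (by omega)

theorem partA_aux {n : ℕ} (g' : ∀ j : ℕ, G.obj j) :
    ∀ (d i : ℕ), n ≤ i + d → i < n → G.map (iOH i n) (G.YS n g' i) = g' i := by
  intro d
  induction d with
  | zero => intro i h hi; omega
  | succ d ih =>
    intro i h hi
    rw [G.YS_rec g' (by omega), G.map_mul, G.map_aProd, G.map_dProd]
    have hA : aProd (fun j => G.map (iOH i n) (G.map (mOH i j n) (G.YS n g' j))⁻¹) (i+1) n
        = aProd (fun j => (G.map (iOH i j) (g' j))⁻¹) (i+1) n := by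
      refine aProd_congr _ _ (fun j hj1 hj2 => ?_)
      rw [G.map_inv]
      congr 1
      rw [G.map_comp, G.map_eqOn (ψ := (iOH j n).comp (iOH i j)) (fun v => by
        simp only [fApp_comp, fApp_mOH, fApp_iOH]; split_ifs <;> omega), ← G.map_comp,
        ih j (by omega) (by omega)]
    have hB : dProd (fun j => G.map (iOH i n) (G.map (cOH i n j) (g' j))) i n
        = dProd (fun j => G.map (iOH i j) (g' j)) i n := by
      refine dProd_congr _ _ (fun j hj1 hj2 => ?_)
      rw [G.map_comp, G.map_eqOn (ψ := iOH i j) (fun v => by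
        simp only [fApp_comp, fApp_cOH, fApp_iOH]; omega)]
    rw [hA, hB, dProd_split _ (by omega : i ≤ i + 1) (by omega), dProd_single, ← mul_assoc,
      aProd_inv_mul_dProd, one_mul,
      show iOH i i = OrderHom.id from oh_ext (fun v => by
        simp only [fApp_iOH, fApp_id]; omega), G.map_id]

theorem DGn_SGn {n : ℕ} (g : G.WbarN n) : G.DGn n (G.SGn n g) = g := by
  funext i
  rw [G.DGn_eq, G.SGn_eq, G.partA_aux (G.gE g) n (i:ℕ) (by omega) i.isLt]
  unfold gE
  rw [dif_pos i.isLt]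

/-! ### endpoints of the homotopy -/

theorem H_end1 {n : ℕ} (x : Fin n → G.obj n) : G.Hn n x (τOH n (n+1)) = x := by
  funext i
  show G.hAux n (kOf (τOH n (n+1))) (G.xE x) (n+1) (i:ℕ) = x i
  rw [kOf_τOH, G.hAux_le (by omega) (by omega)]
  unfold xE
  rw [dif_pos i.isLt]

theorem H_end0_aux {n : ℕ} (x : Fin n → G.obj n) :
    ∀ (d i : ℕ), n ≤ i + d → G.YY n (n+1) (G.xE x) i = G.YS n (G.gE (G.DGn n x)) i := by
  intro d
  induction d with
  | zero =>
    intro i h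
    rw [G.YY_le (by omega)]
    show G.xE x i = G.yAux n _ (n+1) i
    rw [G.yAux_big (by omega) (by omega)]
    unfold xE
    rw [dif_neg (by omega)]
  | succ d ih =>
    intro i h
    by_cases hi : n ≤ i
    · rw [G.YY_le (by omega)]
      show G.xE x i = G.yAux n _ (n+1) i
      rw [G.yAux_big (by omega) (by omega)]
      unfold xE
      rw [dif_neg (by omega)]
    · rw [G.YY_rec _ (by omega) (by omega), G.YS_rec _ (by omega)]
      congr 1
      · refine aProd_congr _ _ (fun j hj1 hj2 => ?_)
        rw [ih j (by omega)]
      · rw [show n + 1 - 1 = n from rfl, G.map_dProd]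
        refine dProd_congr _ _ (fun j hj1 hj2 => ?_)
        unfold gE
        rw [dif_pos (by omega : j < n), G.DGn_eq, G.map_comp]
        have hx : G.xE x j = x ⟨j, by omega⟩ := by
          unfold xE
          rw [dif_pos (by omega : j < n)]
        rw [hx]
        refine G.map_eqOn (fun v => by
          simp only [fApp_comp, fApp_mOH, fApp_iOH, fApp_cOH]
          split_ifs <;> omega) _

theorem H_end0 {n : ℕ} (x : Fin n → G.obj n) :
    G.Hn n x (τOH n 0) = G.SGn n (G.DGn n x) := by
  funext i
  show G.hAux n (kOf (τOH n 0)) (G.xE x) (n+1) (i:ℕ) = _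
  rw [kOf_τOH, G.SGn_eq]
  show G.YY n (n+1-0) (G.xE x) (i:ℕ) = _
  rw [show n+1-0 = n+1 from rfl]
  exact G.H_end0_aux x n (i:ℕ) (by omega)

end SGrp
end Paper
namespace Paper
namespace SGrp
variable (G : SGrp)

/-- `diagMap` entry as an `ℕ`-indexed formula. -/
def DM {m n : ℕ} (θ : Fin (m+1) →o Fin (n+1)) (x : Fin n → G.obj n) (i : ℕ) : G.obj m :=
  dProd (fun j => G.map θ (G.xE x j)) (fApp θ i) (fApp θ (i+1))

theorem diagMap_apply {m n : ℕ} (θ : Fin (m+1) →o Fin (n+1)) (x : Fin n → G.obj n)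
    (i : Fin m) : G.diagMap θ x i = G.DM θ x (i:ℕ) := by
  unfold diagMap DM
  rw [← fApp_coe θ i.castSucc, ← fApp_coe θ i.succ, Fin.coe_castSucc, Fin.val_succ]

theorem xE_diagMap {m n : ℕ} (θ : Fin (m+1) →o Fin (n+1)) (x : Fin n → G.obj n) (j : ℕ) :
    G.xE (G.diagMap θ x) j = G.DM θ x j := by
  by_cases hj : j < m
  · show dite _ _ _ = _
    rw [dif_pos hj, G.diagMap_apply]
  · show dite _ _ _ = _
    rw [dif_neg hj]
    unfold DM
    have he : fApp θ j = fApp θ (j+1) := by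
      have harg : (⟨min j m, Nat.lt_succ_of_le (Nat.min_le_right _ _)⟩ : Fin (m+1))
          = ⟨min (j+1) m, Nat.lt_succ_of_le (Nat.min_le_right _ _)⟩ :=
        Fin.ext (show min j m = min (j+1) m by omega)
      unfold fApp
      rw [harg]
    rw [dProd_empty _ (le_of_eq he.symm)]

theorem xE_Hn {n : ℕ} (x : Fin n → G.obj n) (t : Fin (n+1) →o Fin 2) (j : ℕ) :
    G.xE (G.Hn n x t) j = G.YY n (kOf t) (G.xE x) j := by
  by_cases hj : j < n
  · show dite _ _ _ = _
    rw [dif_pos hj]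
    rfl
  · show dite _ _ _ = _
    rw [dif_neg hj, G.YY_le (by have := kOf_le t; omega)]
    show _ = dite _ _ _
    rw [dif_neg hj]

/-- naturality of the homotopy `H` w.r.t. a single operator. -/
def NatP {m n : ℕ} (θ : Fin (m+1) →o Fin (n+1)) : Prop :=
  ∀ (x : Fin n → G.obj n) (t : Fin (n+1) →o Fin 2),
    G.diagMap θ (G.Hn n x t) = G.Hn m (G.diagMap θ x) (t.comp θ)

theorem diagMap_id {n : ℕ} (x : Fin n → G.obj n) :
    G.diagMap (OrderHom.id : Fin (n+1) →o Fin (n+1)) x = x := by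
  funext i
  rw [G.diagMap_apply]
  unfold DM
  have h1 : fApp (OrderHom.id : Fin (n+1) →o Fin (n+1)) (i:ℕ) = (i:ℕ) := by
    rw [fApp_id]; have := i.isLt; omega
  have h2 : fApp (OrderHom.id : Fin (n+1) →o Fin (n+1)) ((i:ℕ)+1) = (i:ℕ)+1 := by
    rw [fApp_id]; have := i.isLt; omega
  rw [h1, h2, dProd_single, G.map_id]
  show dite _ _ _ = _
  rw [dif_pos i.isLt]

theorem natP_id {n : ℕ} : G.NatP (OrderHom.id : Fin (n+1) →o Fin (n+1)) := by
  intro x t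
  rw [G.diagMap_id, G.diagMap_id, OrderHom.comp_id]

theorem diagMap_comp {m c n : ℕ} (φ₁ : Fin (m+1) →o Fin (c+1)) (φ₂ : Fin (c+1) →o Fin (n+1))
    (x : Fin n → G.obj n) :
    G.diagMap (φ₂.comp φ₁) x = G.diagMap φ₁ (G.diagMap φ₂ x) := by
  funext i
  rw [G.diagMap_apply, G.diagMap_apply]
  unfold DM
  have step : ∀ u, G.map φ₁ (G.xE (G.diagMap φ₂ x) u)
      = dProd (fun j => G.map (φ₂.comp φ₁) (G.xE x j)) (fApp φ₂ u) (fApp φ₂ (u+1)) := by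
    intro u
    rw [G.xE_diagMap]
    unfold DM
    rw [G.map_dProd]
    exact dProd_congr _ _ (fun j _ _ => G.map_comp φ₁ φ₂ (G.xE x j))
  rw [dProd_congr _ _ (fun u _ _ => step u),
    dProd_glue _ (fun u => fApp φ₂ u) (fun u v huv => fApp_mono φ₂ huv)
      (fApp_mono φ₁ (by omega)),
    ← fApp_comp, ← fApp_comp]

theorem natP_comp {m c n : ℕ} {φ₁ : Fin (m+1) →o Fin (c+1)} {φ₂ : Fin (c+1) →o Fin (n+1)}
    (h2 : G.NatP φ₂) (h1 : G.NatP φ₁) : G.NatP (φ₂.comp φ₁) := by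
  intro x t
  rw [G.diagMap_comp, h2 x t, h1 (G.diagMap φ₂ x) (t.comp φ₂), ← G.diagMap_comp]
  rfl

end SGrp
end Paper
namespace Paper

theorem aProd_split {γ : Type*} [Monoid γ] (f : ℕ → γ) :
    ∀ {c b a : ℕ}, a ≤ b → b ≤ c → aProd f a c = aProd f a b * aProd f b c := by
  intro c
  induction c with
  | zero =>
    intro b a h1 h2
    have hb : b = 0 := by omega
    subst hb
    rw [aProd_empty f (le_refl 0), mul_one]
  | succ c ih =>
    intro b a h1 h2
    by_cases hbc : b ≤ c
    · rw [aProd_succ f (by omega), aProd_succ f hbc, ih h1 hbc, mul_assoc]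
    · have : b = c + 1 := by omega
      subst this
      rw [aProd_empty f le_rfl, mul_one]

/-- re-indexing an ascending product downwards by one. -/
theorem aProd_reidx {γ : Type*} [Monoid γ] (f g : ℕ → γ) :
    ∀ {b a : ℕ}, 1 ≤ a → (∀ j, a ≤ j → j < b → f j = g (j-1)) →
      aProd f a b = aProd g (a-1) (b-1) := by
  intro b
  induction b with
  | zero => intro a _ _; rfl
  | succ b ih =>
    intro a ha h
    by_cases hab : a ≤ b
    · have e2 : aProd g (a-1) b = aProd g (a-1) (b-1) * g (b-1) := by
        have := aProd_succ g (show a-1 ≤ b-1 by omega)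
        rwa [show (b-1)+1 = b by omega] at this
      rw [aProd_succ f hab, show (b+1)-1 = b from rfl, e2,
        ih ha (fun j h1 h2 => h j h1 (by omega)), h b hab (by omega)]
    · rw [aProd_empty f (by omega), aProd_empty g (by omega)]

/-- re-indexing a descending product downwards by one. -/
theorem dProd_reidx {γ : Type*} [Monoid γ] (f g : ℕ → γ) :
    ∀ {b a : ℕ}, 1 ≤ a → (∀ j, a ≤ j → j < b → f j = g (j-1)) →
      dProd f a b = dProd g (a-1) (b-1) := by
  intro b
  induction b with
  | zero => intro a _ _; rfl
  | succ b ih =>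
    intro a ha h
    by_cases hab : a ≤ b
    · have e2 : dProd g (a-1) b = g (b-1) * dProd g (a-1) (b-1) := by
        have := dProd_succ g (show a-1 ≤ b-1 by omega)
        rwa [show (b-1)+1 = b by omega] at this
      rw [dProd_succ f hab, show (b+1)-1 = b from rfl, e2,
        ih ha (fun j h1 h2 => h j h1 (by omega)), h b hab (by omega)]
    · rw [dProd_empty f (by omega), dProd_empty g (by omega)]

namespace SGrp
variable (G : SGrp)

theorem mOH_self_map {i N : ℕ} (w : G.obj N) : G.map (mOH i i N) w = w := by
  rw [show mOH i i N = OrderHom.id from oh_ext (fun v => by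
    rw [fApp_mOH, fApp_id]; split_ifs <;> omega), G.map_id]

theorem aProd_inv_map {m n : ℕ} (θ : Fin (m+1) →o Fin (n+1)) (F : ℕ → G.obj n) (a b : ℕ) :
    aProd (fun j => (G.map θ (F j))⁻¹) a b = G.map θ (aProd (fun j => (F j)⁻¹) a b) := by
  rw [G.map_aProd]
  exact aProd_congr _ _ (fun j _ _ => (G.map_inv θ (F j)).symm)

/-! ### σ-naturality -/

theorem kOf_σ {n : ℕ} (t : Fin (n+1) →o Fin 2) (l : ℕ) (hl : l ≤ n) :
    kOf (t.comp (σOH l (n+1) n)) = if l < kOf t then kOf t + 1 else kOf t := by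
  rw [kOf_comp]
  have hk := kOf_le t
  rw [Finset.filter_congr (q := fun i : Fin (n+2) =>
      (i:ℕ) < (if l < kOf t then kOf t + 1 else kOf t)) (fun i _ => ?_)]
  · exact card_lt_filter (n+1) _ (by split_ifs <;> omega)
  · rw [show ((σOH l (n+1) n i : Fin (n+1)) : ℕ)
        = min (if (i:ℕ) ≤ l then (i:ℕ) else (i:ℕ)-1) n from rfl]
    have := i.isLt
    split_ifs <;> omega

theorem DM_σ {n l : ℕ} (hl : l ≤ n) (x : Fin n → G.obj n) (j : ℕ) :
    G.DM (σOH l (n+1) n) x j = if j < l then G.map (σOH l (n+1) n) (G.xE x j)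
      else if j = l then 1 else G.map (σOH l (n+1) n) (G.xE x (j-1)) := by
  unfold DM
  by_cases h1 : j < l
  · rw [if_pos h1, show fApp (σOH l (n+1) n) j = j by rw [fApp_σOH]; split_ifs <;> omega,
      show fApp (σOH l (n+1) n) (j+1) = j+1 by rw [fApp_σOH]; split_ifs <;> omega, dProd_single]
  · rw [if_neg h1]
    by_cases h2 : j = l
    · rw [if_pos h2, show fApp (σOH l (n+1) n) j = l by rw [fApp_σOH]; split_ifs <;> omega,
        show fApp (σOH l (n+1) n) (j+1) = l by rw [fApp_σOH]; split_ifs <;> omega,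
        dProd_empty _ le_rfl]
    · rw [if_neg h2]
      by_cases h3 : j ≤ n
      · rw [show fApp (σOH l (n+1) n) j = j-1 by rw [fApp_σOH]; split_ifs <;> omega,
          show fApp (σOH l (n+1) n) (j+1) = j by rw [fApp_σOH]; split_ifs <;> omega]
        have hs := dProd_single (fun u => G.map (σOH l (n+1) n) (G.xE x u)) (j-1)
        rw [show (j-1)+1 = j by omega] at hs
        exact hs
      · rw [show fApp (σOH l (n+1) n) j = n by rw [fApp_σOH]; split_ifs <;> omega,
          show fApp (σOH l (n+1) n) (j+1) = n by rw [fApp_σOH]; split_ifs <;> omega, dProd_empty _ le_rfl,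
          show G.xE x (j-1) = 1 by unfold xE; rw [dif_neg (by omega)], G.map_one]

theorem σ_swap1 {n l i j : ℕ} (hl : l ≤ n) (hij : i ≤ j) (hjl : j < l) (w : G.obj n) :
    G.map (mOH i j (n+1)) (G.map (σOH l (n+1) n) w)
      = G.map (σOH l (n+1) n) (G.map (mOH i j n) w) := by
  rw [G.map_comp, G.map_comp]
  exact G.map_eqOn (fun v => by
    simp only [fApp_comp, fApp_mOH, fApp_σOH]; split_ifs <;> omega) w

theorem σ_swap2 {n l i j : ℕ} (hl : l ≤ n) (hli : l < i) (hij : i ≤ j) (hjn : j ≤ n+1)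
    (w : G.obj n) : G.map (mOH i j (n+1)) (G.map (σOH l (n+1) n) w)
      = G.map (σOH l (n+1) n) (G.map (mOH (i-1) (j-1) n) w) := by
  rw [G.map_comp, G.map_comp]
  exact G.map_eqOn (fun v => by
    simp only [fApp_comp, fApp_mOH, fApp_σOH]; split_ifs <;> omega) w

theorem σ_swap34 {n l i j : ℕ} (hl : l ≤ n) (hil : i ≤ l) (hlj : l < j) (hjn : j ≤ n+1)
    (w : G.obj n) : G.map (mOH i j (n+1)) (G.map (σOH l (n+1) n) w)
      = G.map (σOH l (n+1) n) (G.map (mOH i (j-1) n) w) := by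
  rw [G.map_comp, G.map_comp]
  exact G.map_eqOn (fun v => by
    simp only [fApp_comp, fApp_mOH, fApp_σOH]; split_ifs <;> omega) w

theorem σ_main {l n : ℕ} (hl : l ≤ n) (x : Fin n → G.obj n) (k K : ℕ) (hk : k ≤ n+1)
    (hK : K = if l < k then k + 1 else k) :
    ∀ (d i : ℕ), n + 1 ≤ i + d →
      G.YY (n+1) K (G.DM (σOH l (n+1) n) x) i
        = (if i < l then G.map (σOH l (n+1) n) (G.YY n k (G.xE x) i)
           else if i = l then 1
           else G.map (σOH l (n+1) n) (G.YY n k (G.xE x) (i-1))) := by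
  have hK2 : K ≤ n + 2 := by rw [hK]; split_ifs <;> omega
  have r1 : ∀ i : ℕ, K ≤ i + 1 →
      G.YY (n+1) K (G.DM (σOH l (n+1) n) x) i
        = (if i < l then G.map (σOH l (n+1) n) (G.YY n k (G.xE x) i)
           else if i = l then 1
           else G.map (σOH l (n+1) n) (G.YY n k (G.xE x) (i-1))) := by
    intro i hreg
    have hreg' : K ≤ i + 1 := hreg
    rw [hK] at hreg
    rw [G.YY_le hreg', G.DM_σ hl]
    by_cases h1 : i < l
    · rw [if_pos h1, if_pos h1, G.YY_le (by split_ifs at hreg <;> omega)]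
    · rw [if_neg h1, if_neg h1]
      by_cases h2 : i = l
      · rw [if_pos h2, if_pos h2]
      · rw [if_neg h2, if_neg h2, G.YY_le (by split_ifs at hreg <;> omega)]
  intro d
  induction d with
  | zero => intro i hi; exact r1 i (by omega)
  | succ d ih =>
    intro i hi
    by_cases hreg : K ≤ i + 1
    · exact r1 i hreg
    · have hik : i + 2 ≤ K := by omega
      rw [G.YY_rec _ hK2 hik]
      by_cases hlk : l < k
      · -- K = k + 1
        have hKk : K = k + 1 := by rw [hK, if_pos hlk]
        have hK1 : K - 1 = k := by omega
        rw [hK1]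
        have hik' : i + 1 ≤ k := by omega
        by_cases hil : i < l
        · -- subcase b3 : i < l < k
          rw [if_pos hil]
          have hsp : aProd (fun j =>
                (G.map (mOH i j (n+1)) (G.YY (n+1) K (G.DM (σOH l (n+1) n) x) j))⁻¹) (i+1) k
              = aProd (fun j =>
                  (G.map (σOH l (n+1) n) (G.map (mOH i j n) (G.YY n k (G.xE x) j)))⁻¹)
                (i+1) (k-1) := by
            rw [aProd_split _ (by omega : i+1 ≤ l) (by omega : l ≤ k),
              aProd_cons _ (by omega : l < k)]
            have c1 : aProd (fun j =>
                  (G.map (mOH i j (n+1)) (G.YY (n+1) K (G.DM (σOH l (n+1) n) x) j))⁻¹) (i+1) l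
                = aProd (fun j =>
                    (G.map (σOH l (n+1) n) (G.map (mOH i j n) (G.YY n k (G.xE x) j)))⁻¹)
                  (i+1) l := by
              refine aProd_congr _ _ (fun j hj1 hj2 => ?_)
              rw [ih j (by omega), if_pos (by omega : j < l),
                G.σ_swap1 hl (by omega) (by omega)]
            have c2 : (G.map (mOH i l (n+1)) (G.YY (n+1) K (G.DM (σOH l (n+1) n) x) l))⁻¹
                = 1 := by
              rw [ih l (by omega), if_neg (by omega), if_pos rfl, G.map_one, inv_one]
            have c3 : aProd (fun j =>
                  (G.map (mOH i j (n+1)) (G.YY (n+1) K (G.DM (σOH l (n+1) n) x) j))⁻¹) (l+1) k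
                = aProd (fun j =>
                    (G.map (σOH l (n+1) n) (G.map (mOH i j n) (G.YY n k (G.xE x) j)))⁻¹)
                  l (k-1) := by
              have := aProd_reidx (fun j =>
                  (G.map (mOH i j (n+1)) (G.YY (n+1) K (G.DM (σOH l (n+1) n) x) j))⁻¹)
                (fun j =>
                  (G.map (σOH l (n+1) n) (G.map (mOH i j n) (G.YY n k (G.xE x) j)))⁻¹)
                (b := k) (a := l+1) (by omega) (fun j hj1 hj2 => by
                  beta_reduce
                  rw [ih j (by omega), if_neg (by omega), if_neg (by omega),
                    G.σ_swap34 hl (by omega) (by omega) (by omega)])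
              rwa [Nat.add_sub_cancel] at this
            rw [c1, c2, c3, one_mul, ← aProd_split _ (by omega : i+1 ≤ l) (by omega)]
          have hdp : G.map (mOH i k (n+1)) (dProd (G.DM (σOH l (n+1) n) x) i k)
              = G.map (σOH l (n+1) n)
                  (G.map (mOH i (k-1) n) (dProd (G.xE x) i (k-1))) := by
            have e1 : dProd (G.DM (σOH l (n+1) n) x) i k
                = dProd (fun j => G.map (σOH l (n+1) n) (G.xE x j)) i (k-1) := by
              rw [dProd_split _ (by omega : i ≤ l) (by omega : l ≤ k),
                dProd_split _ (by omega : l ≤ l+1) (by omega : l+1 ≤ k)]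
              have c1 : dProd (G.DM (σOH l (n+1) n) x) i l
                  = dProd (fun j => G.map (σOH l (n+1) n) (G.xE x j)) i l := by
                refine dProd_congr _ _ (fun j hj1 hj2 => ?_)
                rw [G.DM_σ hl, if_pos (by omega)]
              have c2 : dProd (G.DM (σOH l (n+1) n) x) l (l+1) = 1 := by
                rw [dProd_single, G.DM_σ hl, if_neg (by omega), if_pos rfl]
              have c3 : dProd (G.DM (σOH l (n+1) n) x) (l+1) k
                  = dProd (fun j => G.map (σOH l (n+1) n) (G.xE x j)) l (k-1) := by
                have := dProd_reidx (G.DM (σOH l (n+1) n) x)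
                  (fun j => G.map (σOH l (n+1) n) (G.xE x j)) (b := k) (a := l+1)
                  (by omega) (fun j hj1 hj2 => by
                    beta_reduce
                    rw [G.DM_σ hl, if_neg (by omega), if_neg (by omega)])
                rwa [Nat.add_sub_cancel] at this
              rw [c1, c2, c3, mul_one, ← dProd_split _ (by omega : i ≤ l) (by omega : l ≤ k-1)]
            rw [e1, ← G.map_dProd, G.σ_swap34 hl (by omega) (by omega) (by omega : k ≤ n+1)]
          rw [hsp, hdp, G.aProd_inv_map, ← G.map_mul,
            ← G.YY_rec (G.xE x) (by omega) (by omega : i + 2 ≤ k)]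
        · rw [if_neg hil]
          by_cases hieq : i = l
          · -- subcase b2 : i = l
            rw [if_pos hieq]
            have c3 : aProd (fun j =>
                  (G.map (mOH i j (n+1)) (G.YY (n+1) K (G.DM (σOH l (n+1) n) x) j))⁻¹) (i+1) k
                = aProd (fun j =>
                    (G.map (σOH l (n+1) n) (G.map (mOH i j n) (G.YY n k (G.xE x) j)))⁻¹)
                  i (k-1) := by
              have := aProd_reidx (fun j =>
                  (G.map (mOH i j (n+1)) (G.YY (n+1) K (G.DM (σOH l (n+1) n) x) j))⁻¹)
                (fun j =>
                  (G.map (σOH l (n+1) n) (G.map (mOH i j n) (G.YY n k (G.xE x) j)))⁻¹)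
                (b := k) (a := i+1) (by omega) (fun j hj1 hj2 => by
                  beta_reduce
                  rw [ih j (by omega), if_neg (by omega), if_neg (by omega),
                    G.σ_swap34 hl (by omega) (by omega) (by omega)])
              rwa [Nat.add_sub_cancel] at this
            have hdp : G.map (mOH i k (n+1)) (dProd (G.DM (σOH l (n+1) n) x) i k)
                = G.map (σOH l (n+1) n)
                    (G.map (mOH i (k-1) n) (dProd (G.xE x) i (k-1))) := by
              have e1 : dProd (G.DM (σOH l (n+1) n) x) i k
                  = dProd (fun j => G.map (σOH l (n+1) n) (G.xE x j)) i (k-1) := by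
                rw [dProd_split _ (by omega : i ≤ i+1) (by omega : i+1 ≤ k), dProd_single,
                  G.DM_σ hl, if_neg (by omega), if_pos hieq, mul_one]
                have := dProd_reidx (G.DM (σOH l (n+1) n) x)
                  (fun j => G.map (σOH l (n+1) n) (G.xE x j)) (b := k) (a := i+1)
                  (by omega) (fun j hj1 hj2 => by
                    beta_reduce
                    rw [G.DM_σ hl, if_neg (by omega), if_neg (by omega)])
                rwa [Nat.add_sub_cancel] at this
              rw [e1, ← G.map_dProd, G.σ_swap34 hl (by omega) (by omega) (by omega : k ≤ n+1)]
            rw [c3, hdp]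
            by_cases hl2 : i + 2 ≤ k
            · rw [aProd_cons _ (by omega : i < k - 1), G.mOH_self_map, G.aProd_inv_map,
                G.YY_rec (G.xE x) (by omega) hl2, G.map_mul]
              group
            · have hk1 : k - 1 = i := by omega
              rw [hk1, aProd_empty _ le_rfl, dProd_empty _ le_rfl, G.map_one, G.map_one,
                one_mul]
          · -- subcase b1 : l < i
            rw [if_neg hieq]
            have hli : l < i := by omega
            have c3 : aProd (fun j =>
                  (G.map (mOH i j (n+1)) (G.YY (n+1) K (G.DM (σOH l (n+1) n) x) j))⁻¹) (i+1) k
                = aProd (fun j =>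
                    (G.map (σOH l (n+1) n) (G.map (mOH (i-1) j n) (G.YY n k (G.xE x) j)))⁻¹)
                  i (k-1) := by
              have := aProd_reidx (fun j =>
                  (G.map (mOH i j (n+1)) (G.YY (n+1) K (G.DM (σOH l (n+1) n) x) j))⁻¹)
                (fun j =>
                  (G.map (σOH l (n+1) n) (G.map (mOH (i-1) j n) (G.YY n k (G.xE x) j)))⁻¹)
                (b := k) (a := i+1) (by omega) (fun j hj1 hj2 => by
                  beta_reduce
                  rw [ih j (by omega), if_neg (by omega), if_neg (by omega),
                    G.σ_swap2 hl hli (by omega) (by omega)])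
              rwa [Nat.add_sub_cancel] at this
            have hdp : G.map (mOH i k (n+1)) (dProd (G.DM (σOH l (n+1) n) x) i k)
                = G.map (σOH l (n+1) n)
                    (G.map (mOH (i-1) (k-1) n) (dProd (G.xE x) (i-1) (k-1))) := by
              have e1 : dProd (G.DM (σOH l (n+1) n) x) i k
                  = dProd (fun j => G.map (σOH l (n+1) n) (G.xE x j)) (i-1) (k-1) := by
                have := dProd_reidx (G.DM (σOH l (n+1) n) x)
                  (fun j => G.map (σOH l (n+1) n) (G.xE x j)) (b := k) (a := i)
                  (by omega) (fun j hj1 hj2 => by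
                    beta_reduce
                    rw [G.DM_σ hl, if_neg (by omega), if_neg (by omega)])
                exact this
              rw [e1, ← G.map_dProd, G.σ_swap2 hl hli (by omega) (by omega : k ≤ n+1)]
            rw [c3, hdp, G.aProd_inv_map, ← G.map_mul]
            have := G.YY_rec (G.xE x) (n := n) (k := k) (i := i - 1) (by omega)
              (by omega : (i-1) + 2 ≤ k)
            rw [show i - 1 + 1 = i by omega] at this
            rw [← this]
      · -- K = k, l ≥ k : subcase (a)
        have hKk : K = k := by rw [hK, if_neg hlk]
        have hK1 : K - 1 = k - 1 := by omega
        rw [hK1]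
        have hik2 : i + 2 ≤ k := by omega
        have hil : i < l := by omega
        rw [if_pos hil]
        have hsp : aProd (fun j =>
              (G.map (mOH i j (n+1)) (G.YY (n+1) K (G.DM (σOH l (n+1) n) x) j))⁻¹) (i+1) (k-1)
            = aProd (fun j =>
                (G.map (σOH l (n+1) n) (G.map (mOH i j n) (G.YY n k (G.xE x) j)))⁻¹)
              (i+1) (k-1) := by
          refine aProd_congr _ _ (fun j hj1 hj2 => ?_)
          rw [ih j (by omega), if_pos (by omega : j < l), G.σ_swap1 hl (by omega) (by omega)]
        have hdp : G.map (mOH i (k-1) (n+1)) (dProd (G.DM (σOH l (n+1) n) x) i (k-1))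
            = G.map (σOH l (n+1) n) (G.map (mOH i (k-1) n) (dProd (G.xE x) i (k-1))) := by
          have e1 : dProd (G.DM (σOH l (n+1) n) x) i (k-1)
              = dProd (fun j => G.map (σOH l (n+1) n) (G.xE x j)) i (k-1) := by
            refine dProd_congr _ _ (fun j hj1 hj2 => ?_)
            rw [G.DM_σ hl, if_pos (by omega)]
          rw [e1, ← G.map_dProd, G.σ_swap1 hl (by omega) (by omega)]
        rw [hsp, hdp, G.aProd_inv_map, ← G.map_mul,
          ← G.YY_rec (G.xE x) (by omega) (by omega : i + 2 ≤ k)]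

theorem natP_σ {l n : ℕ} (hl : l ≤ n) : G.NatP (σOH l (n+1) n) := by
  intro x t
  funext i
  rw [G.diagMap_apply, G.DM_σ hl, G.xE_Hn, G.xE_Hn,
    show G.Hn (n+1) (G.diagMap (σOH l (n+1) n) x) (t.comp (σOH l (n+1) n)) i
      = G.YY (n+1) (kOf (t.comp (σOH l (n+1) n)))
          (G.xE (G.diagMap (σOH l (n+1) n) x)) (i:ℕ) from rfl,
    kOf_σ t l hl, funext (G.xE_diagMap (σOH l (n+1) n) x),
    G.σ_main hl x (kOf t) _ (kOf_le t) rfl (n+2) (i:ℕ) (by omega)]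

end SGrp
end Paper
namespace Paper
namespace SGrp
variable (G : SGrp)

/-! ### δ-naturality -/

theorem kOf_δ {n : ℕ} (t : Fin (n+1+1) →o Fin 2) (l : ℕ) (hl : l ≤ n+1) :
    kOf (t.comp (δOH l n (n+1))) = if l < kOf t then kOf t - 1 else kOf t := by
  rw [kOf_comp]
  have hk := kOf_le t
  rw [Finset.filter_congr (q := fun i : Fin (n+1) =>
      (i:ℕ) < (if l < kOf t then kOf t - 1 else kOf t)) (fun i _ => ?_)]
  · exact card_lt_filter n _ (by split_ifs <;> omega)
  · rw [show ((δOH l n (n+1) i : Fin (n+2)) : ℕ)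
        = min (if (i:ℕ) < l then (i:ℕ) else (i:ℕ)+1) (n+1) from rfl]
    have := i.isLt
    split_ifs <;> omega

theorem DM_δ {n l : ℕ} (hl : l ≤ n+1) (x : Fin (n+1) → G.obj (n+1)) (j : ℕ) (hj : j + 1 ≤ n) :
    G.DM (δOH l n (n+1)) x j =
      if j + 1 < l then G.map (δOH l n (n+1)) (G.xE x j)
      else if j + 1 = l then G.map (δOH l n (n+1)) (G.xE x (j+1) * G.xE x j)
      else G.map (δOH l n (n+1)) (G.xE x (j+1)) := by
  unfold DM
  by_cases h1 : j + 1 < l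
  · rw [if_pos h1, show fApp (δOH l n (n+1)) j = j by rw [fApp_δOH]; split_ifs <;> omega,
      show fApp (δOH l n (n+1)) (j+1) = j+1 by rw [fApp_δOH]; split_ifs <;> omega, dProd_single]
  · rw [if_neg h1]
    by_cases h2 : j + 1 = l
    · rw [if_pos h2, show fApp (δOH l n (n+1)) j = j by rw [fApp_δOH]; split_ifs <;> omega,
        show fApp (δOH l n (n+1)) (j+1) = (j+1)+1 by rw [fApp_δOH]; split_ifs <;> omega,
        G.map_mul, dProd_succ _ (by omega : j ≤ j+1), dProd_single]
    · rw [if_neg h2, show fApp (δOH l n (n+1)) j = j+1 by rw [fApp_δOH]; split_ifs <;> omega,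
        show fApp (δOH l n (n+1)) (j+1) = (j+1)+1 by rw [fApp_δOH]; split_ifs <;> omega,
        dProd_single]

theorem δ_swap1 {n l i j : ℕ} (hl : l ≤ n+1) (hij : i ≤ j) (hjl : j + 1 ≤ l) (w : G.obj (n+1)) :
    G.map (mOH i j n) (G.map (δOH l n (n+1)) w)
      = G.map (δOH l n (n+1)) (G.map (mOH i j (n+1)) w) := by
  rw [G.map_comp, G.map_comp]
  exact G.map_eqOn (fun v => by
    simp only [fApp_comp, fApp_mOH, fApp_δOH]; split_ifs <;> omega) w

theorem δ_swap2 {n l i j : ℕ} (hl : l ≤ n+1) (hli : l ≤ i) (hij : i ≤ j) (hjn : j ≤ n)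
    (w : G.obj (n+1)) : G.map (mOH i j n) (G.map (δOH l n (n+1)) w)
      = G.map (δOH l n (n+1)) (G.map (mOH (i+1) (j+1) (n+1)) w) := by
  rw [G.map_comp, G.map_comp]
  exact G.map_eqOn (fun v => by
    simp only [fApp_comp, fApp_mOH, fApp_δOH]; split_ifs <;> omega) w

theorem δ_swap3 {n l i j : ℕ} (hl : l ≤ n+1) (hil : i < l) (hij : i ≤ j) (hlj : l ≤ j + 1)
    (w : G.obj (n+1)) : G.map (mOH i j n) (G.map (δOH l n (n+1)) w)
      = G.map (δOH l n (n+1)) (G.map (mOH i (j+1) (n+1)) w) := by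
  rw [G.map_comp, G.map_comp]
  exact G.map_eqOn (fun v => by
    simp only [fApp_comp, fApp_mOH, fApp_δOH]; split_ifs <;> omega) w

theorem δ_swap5 {n l i : ℕ} (hl : l ≤ n+1) (hil : i < l) (w : G.obj (n+1)) :
    G.map (δOH l n (n+1)) (G.map (mOH i l (n+1)) w)
      = G.map (δOH l n (n+1)) (G.map (mOH i (l-1) (n+1)) w) := by
  rw [G.map_comp, G.map_comp]
  exact G.map_eqOn (fun v => by
    simp only [fApp_comp, fApp_mOH, fApp_δOH]; split_ifs <;> omega) w

theorem δ_cancel {n l a : ℕ} (hl : l ≤ n+1) (ha : a + 1 = l) (w : G.obj (n+1)) :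
    G.map (δOH l n (n+1)) (G.map (mOH a (a+1) (n+1)) w) = G.map (δOH l n (n+1)) w := by
  rw [G.map_comp]
  exact G.map_eqOn (fun v => by
    simp only [fApp_comp, fApp_mOH, fApp_δOH]; split_ifs <;> omega) w

theorem δ_swap6 {n l i a : ℕ} (hl : l ≤ n+1) (hia : i ≤ a) (ha : a + 1 = l)
    (w : G.obj (n+1)) :
    G.map (δOH l n (n+1)) (G.map (mOH i a (n+1)) (G.map (mOH a (a+1) (n+1)) w))
      = G.map (δOH l n (n+1)) (G.map (mOH i (a+1) (n+1)) w) := by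
  rw [G.map_comp, G.map_comp, G.map_comp]
  exact G.map_eqOn (fun v => by
    simp only [fApp_comp, fApp_mOH, fApp_δOH]; split_ifs <;> omega) w

theorem δ_main {l n : ℕ} (hl : l ≤ n+1) (x : Fin (n+1) → G.obj (n+1)) (k K : ℕ)
    (hk : k ≤ n+2) (hK : K = if l < k then k - 1 else k) :
    ∀ (d i : ℕ), n ≤ i + d → i < n →
      G.YY n K (G.DM (δOH l n (n+1)) x) i
        = (if i+1 < l then G.map (δOH l n (n+1)) (G.YY (n+1) k (G.xE x) i)
           else if i+1 = l then G.map (δOH l n (n+1))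
             (G.YY (n+1) k (G.xE x) (i+1) * G.YY (n+1) k (G.xE x) i)
           else G.map (δOH l n (n+1)) (G.YY (n+1) k (G.xE x) (i+1))) := by
  have hK2 : K ≤ n + 1 := by rw [hK]; split_ifs <;> omega
  have r1 : ∀ i : ℕ, K ≤ i + 1 → i < n →
      G.YY n K (G.DM (δOH l n (n+1)) x) i
        = (if i+1 < l then G.map (δOH l n (n+1)) (G.YY (n+1) k (G.xE x) i)
           else if i+1 = l then G.map (δOH l n (n+1))
             (G.YY (n+1) k (G.xE x) (i+1) * G.YY (n+1) k (G.xE x) i)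
           else G.map (δOH l n (n+1)) (G.YY (n+1) k (G.xE x) (i+1))) := by
    intro i hreg hin
    have hreg' : K ≤ i + 1 := hreg
    rw [hK] at hreg
    rw [G.YY_le hreg', G.DM_δ hl x i (by omega)]
    by_cases h1 : i + 1 < l
    · rw [if_pos h1, if_pos h1, G.YY_le (by split_ifs at hreg <;> omega)]
    · rw [if_neg h1, if_neg h1]
      by_cases h2 : i + 1 = l
      · rw [if_pos h2, if_pos h2,
          G.YY_le (by split_ifs at hreg <;> omega : k ≤ (i+1) + 1)]
        by_cases hks : k ≤ i + 1
        · rw [G.YY_le hks]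
        · have hk2 : k - 1 = i + 1 := by split_ifs at hreg <;> omega
          have hYi : G.YY (n+1) k (G.xE x) i = G.map (mOH i (i+1) (n+1)) (G.xE x i) := by
            rw [G.YY_rec (G.xE x) (by omega) (by omega), hk2, aProd_empty _ le_rfl, one_mul,
              dProd_single]
          rw [hYi, G.map_mul, G.map_mul, G.δ_cancel hl h2]
      · rw [if_neg h2, if_neg h2,
          G.YY_le (by split_ifs at hreg <;> omega : k ≤ (i+1) + 1)]
  intro d
  induction d with
  | zero => intro i hi hin; omega
  | succ d ih =>
    intro i hi hin
    by_cases hreg : K ≤ i + 1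
    · exact r1 i hreg hin
    · have hik : i + 2 ≤ K := by omega
      rw [G.YY_rec _ hK2 hik]
      by_cases hlk : l < k
      · -- K = k - 1
        have hKk : K = k - 1 := by rw [hK, if_pos hlk]
        have hK1 : K - 1 = k - 2 := by omega
        rw [hK1]
        have hik3 : i + 3 ≤ k := by omega
        by_cases hil : l ≤ i
        · -- subcase B1
          rw [if_neg (by omega), if_neg (by omega)]
          have hsp : aProd (fun j =>
                (G.map (mOH i j n) (G.YY n K (G.DM (δOH l n (n+1)) x) j))⁻¹) (i+1) (k-2)
              = aProd (fun j =>
                  (G.map (δOH l n (n+1))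
                    (G.map (mOH (i+1) j (n+1)) (G.YY (n+1) k (G.xE x) j)))⁻¹)
                ((i+1)+1) (k-1) := by
            have hsh := aProd_shift (fun j =>
              (G.map (δOH l n (n+1))
                (G.map (mOH (i+1) j (n+1)) (G.YY (n+1) k (G.xE x) j)))⁻¹)
              (b := k-2) (a := i+1)
            rw [show k - 2 + 1 = k - 1 by omega] at hsh
            rw [← hsh]
            refine aProd_congr _ _ (fun j hj1 hj2 => ?_)
            beta_reduce
            rw [ih j (by omega) (by omega), if_neg (by omega), if_neg (by omega),
              G.δ_swap2 hl hil (by omega) (by omega)]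
          have hdp : G.map (mOH i (k-2) n) (dProd (G.DM (δOH l n (n+1)) x) i (k-2))
              = G.map (δOH l n (n+1))
                  (G.map (mOH (i+1) (k-1) (n+1)) (dProd (G.xE x) (i+1) (k-1))) := by
            have e1 : dProd (G.DM (δOH l n (n+1)) x) i (k-2)
                = dProd (fun j => G.map (δOH l n (n+1)) (G.xE x j)) (i+1) (k-1) := by
              have hsh := dProd_shift (fun j => G.map (δOH l n (n+1)) (G.xE x j))
                (b := k-2) (a := i)
              rw [show k - 2 + 1 = k - 1 by omega] at hsh
              rw [← hsh]
              refine dProd_congr _ _ (fun j hj1 hj2 => ?_)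
              beta_reduce
              rw [G.DM_δ hl x j (by omega), if_neg (by omega), if_neg (by omega)]
            rw [e1, ← G.map_dProd]
            have := G.δ_swap2 (l := l) (i := i) (j := k-2) hl hil (by omega) (by omega)
              (dProd (G.xE x) (i+1) (k-1))
            rw [show k - 2 + 1 = k - 1 by omega] at this
            exact this
          rw [hsp, hdp, G.aProd_inv_map, ← G.map_mul,
            ← G.YY_rec (G.xE x) (by omega) (by omega : (i+1) + 2 ≤ k)]
        · by_cases hieq : i + 1 = l
          · -- subcase B2
            rw [if_neg (by omega), if_pos hieq]
            have hsp : aProd (fun j =>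
                  (G.map (mOH i j n) (G.YY n K (G.DM (δOH l n (n+1)) x) j))⁻¹) (i+1) (k-2)
                = aProd (fun j =>
                    (G.map (δOH l n (n+1))
                      (G.map (mOH i j (n+1)) (G.YY (n+1) k (G.xE x) j)))⁻¹)
                  ((i+1)+1) (k-1) := by
              have hsh := aProd_shift (fun j =>
                (G.map (δOH l n (n+1))
                  (G.map (mOH i j (n+1)) (G.YY (n+1) k (G.xE x) j)))⁻¹)
                (b := k-2) (a := i+1)
              rw [show k - 2 + 1 = k - 1 by omega] at hsh
              rw [← hsh]
              refine aProd_congr _ _ (fun j hj1 hj2 => ?_)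
              beta_reduce
              rw [ih j (by omega) (by omega), if_neg (by omega), if_neg (by omega),
                G.δ_swap3 hl (by omega) (by omega) (by omega)]
            have hdp : G.map (mOH i (k-2) n) (dProd (G.DM (δOH l n (n+1)) x) i (k-2))
                = G.map (δOH l n (n+1))
                    (G.map (mOH i (k-1) (n+1)) (dProd (G.xE x) i (k-1))) := by
              have e1 : dProd (G.DM (δOH l n (n+1)) x) i (k-2)
                  = dProd (fun j => G.map (δOH l n (n+1)) (G.xE x j)) i (k-1) := by
                rw [dProd_split _ (by omega : i ≤ i+1) (by omega : i+1 ≤ k-2), dProd_single,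
                  G.DM_δ hl x i (by omega), if_neg (by omega), if_pos hieq]
                have c3 : dProd (G.DM (δOH l n (n+1)) x) (i+1) (k-2)
                    = dProd (fun j => G.map (δOH l n (n+1)) (G.xE x j)) ((i+1)+1) (k-1) := by
                  have hsh := dProd_shift (fun j => G.map (δOH l n (n+1)) (G.xE x j))
                    (b := k-2) (a := i+1)
                  rw [show k - 2 + 1 = k - 1 by omega] at hsh
                  rw [← hsh]
                  refine dProd_congr _ _ (fun j hj1 hj2 => ?_)
                  beta_reduce
                  rw [G.DM_δ hl x j (by omega), if_neg (by omega), if_neg (by omega)]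
                rw [c3, G.map_mul, dProd_split
                    (fun j => G.map (δOH l n (n+1)) (G.xE x j))
                    (by omega : i ≤ (i+1)+1) (by omega : (i+1)+1 ≤ k-1),
                  dProd_succ _ (by omega : i ≤ i+1), dProd_single]
              rw [e1, ← G.map_dProd]
              have := G.δ_swap3 (l := l) (i := i) (j := k-2) hl (by omega) (by omega) (by omega)
                (dProd (G.xE x) i (k-1))
              rw [show k - 2 + 1 = k - 1 by omega] at this
              exact this
            rw [hsp, hdp, G.aProd_inv_map, ← G.map_mul,
              G.YY_rec (G.xE x) (n := n+1) (k := k) (i := i) (by omega) (by omega),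
              aProd_cons _ (by omega : i + 1 < k - 1)]
            simp only [G.map_mul, G.map_inv]
            rw [G.δ_cancel hl hieq]
            group
          · -- subcase B3 : i + 1 < l
            have hil2 : i + 1 < l := by omega
            rw [if_pos hil2]
            by_cases hlk2 : l ≤ k - 2
            · -- merge point inside the range
              have hA : aProd (fun j =>
                    (G.map (mOH i j n) (G.YY n K (G.DM (δOH l n (n+1)) x) j))⁻¹) (i+1) (k-2)
                  = aProd (fun j =>
                      (G.map (δOH l n (n+1))
                        (G.map (mOH i j (n+1)) (G.YY (n+1) k (G.xE x) j)))⁻¹)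
                    (i+1) (k-1) := by
                rw [aProd_split _ (by omega : i+1 ≤ l-1) (by omega : l-1 ≤ k-2),
                  aProd_cons _ (by omega : l-1 < k-2), show l-1+1 = l by omega]
                have hc1 : aProd (fun j =>
                      (G.map (mOH i j n) (G.YY n K (G.DM (δOH l n (n+1)) x) j))⁻¹) (i+1) (l-1)
                    = aProd (fun j =>
                        (G.map (δOH l n (n+1))
                          (G.map (mOH i j (n+1)) (G.YY (n+1) k (G.xE x) j)))⁻¹)
                      (i+1) (l-1) := by
                  refine aProd_congr _ _ (fun j hj1 hj2 => ?_)
                  rw [ih j (by omega) (by omega), if_pos (by omega : j+1 < l),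
                    G.δ_swap1 hl (by omega) (by omega)]
                have hc2 : (G.map (mOH i (l-1) n)
                      (G.YY n K (G.DM (δOH l n (n+1)) x) (l-1)))⁻¹
                    = (G.map (δOH l n (n+1))
                        (G.map (mOH i (l-1) (n+1)) (G.YY (n+1) k (G.xE x) (l-1))))⁻¹ *
                      (G.map (δOH l n (n+1))
                        (G.map (mOH i l (n+1)) (G.YY (n+1) k (G.xE x) l)))⁻¹ := by
                  rw [ih (l-1) (by omega) (by omega), if_neg (by omega),
                    if_pos (by omega : (l-1)+1 = l),
                    G.δ_swap3 (l := l) (i := i) (j := l-1) hl (by omega) (by omega) (by omega),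
                    show (l-1)+1 = l by omega, G.map_mul, G.map_mul, mul_inv_rev,
                    G.δ_swap5 hl (by omega)]
                have hc3 : aProd (fun j =>
                      (G.map (mOH i j n) (G.YY n K (G.DM (δOH l n (n+1)) x) j))⁻¹) l (k-2)
                    = aProd (fun j =>
                        (G.map (δOH l n (n+1))
                          (G.map (mOH i j (n+1)) (G.YY (n+1) k (G.xE x) j)))⁻¹)
                      (l+1) (k-1) := by
                  have hsh := aProd_shift (fun j =>
                    (G.map (δOH l n (n+1))
                      (G.map (mOH i j (n+1)) (G.YY (n+1) k (G.xE x) j)))⁻¹)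
                    (b := k-2) (a := l)
                  rw [show k - 2 + 1 = k - 1 by omega] at hsh
                  rw [← hsh]
                  refine aProd_congr _ _ (fun j hj1 hj2 => ?_)
                  beta_reduce
                  rw [ih j (by omega) (by omega), if_neg (by omega), if_neg (by omega),
                    G.δ_swap3 hl (by omega) (by omega) (by omega)]
                rw [hc1, hc2, hc3,
                  aProd_split (fun j =>
                      (G.map (δOH l n (n+1))
                        (G.map (mOH i j (n+1)) (G.YY (n+1) k (G.xE x) j)))⁻¹)
                    (by omega : i+1 ≤ l-1) (by omega : l-1 ≤ k-1)]
                have hcons1 := aProd_cons (fun j =>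
                    (G.map (δOH l n (n+1))
                      (G.map (mOH i j (n+1)) (G.YY (n+1) k (G.xE x) j)))⁻¹)
                  (show l-1 < k-1 by omega)
                rw [show l-1+1 = l by omega] at hcons1
                rw [hcons1, aProd_cons (fun j =>
                    (G.map (δOH l n (n+1))
                      (G.map (mOH i j (n+1)) (G.YY (n+1) k (G.xE x) j)))⁻¹)
                  (show l < k-1 by omega)]
                simp only [mul_assoc]
              have hB : G.map (mOH i (k-2) n) (dProd (G.DM (δOH l n (n+1)) x) i (k-2))
                  = G.map (δOH l n (n+1))
                      (G.map (mOH i (k-1) (n+1)) (dProd (G.xE x) i (k-1))) := by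
                have e1 : dProd (G.DM (δOH l n (n+1)) x) i (k-2)
                    = dProd (fun j => G.map (δOH l n (n+1)) (G.xE x j)) i (k-1) := by
                  rw [dProd_split _ (by omega : i ≤ l-1) (by omega : l-1 ≤ k-2),
                    dProd_split _ (by omega : l-1 ≤ l) (by omega : l ≤ k-2)]
                  have hc1 : dProd (G.DM (δOH l n (n+1)) x) i (l-1)
                      = dProd (fun j => G.map (δOH l n (n+1)) (G.xE x j)) i (l-1) := by
                    refine dProd_congr _ _ (fun j hj1 hj2 => ?_)
                    rw [G.DM_δ hl x j (by omega), if_pos (by omega : j+1 < l)]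
                  have hc2 : dProd (G.DM (δOH l n (n+1)) x) (l-1) l
                      = G.map (δOH l n (n+1)) (G.xE x l) *
                        G.map (δOH l n (n+1)) (G.xE x (l-1)) := by
                    have hs := dProd_single (G.DM (δOH l n (n+1)) x) (l-1)
                    rw [show (l-1)+1 = l by omega] at hs
                    rw [hs, G.DM_δ hl x (l-1) (by omega), if_neg (by omega),
                      if_pos (by omega : (l-1)+1 = l), show (l-1)+1 = l by omega, G.map_mul]
                  have hc3 : dProd (G.DM (δOH l n (n+1)) x) l (k-2)
                      = dProd (fun j => G.map (δOH l n (n+1)) (G.xE x j)) (l+1) (k-1) := by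
                    have hsh := dProd_shift (fun j => G.map (δOH l n (n+1)) (G.xE x j))
                      (b := k-2) (a := l)
                    rw [show k - 2 + 1 = k - 1 by omega] at hsh
                    rw [← hsh]
                    refine dProd_congr _ _ (fun j hj1 hj2 => ?_)
                    beta_reduce
                    rw [G.DM_δ hl x j (by omega), if_neg (by omega), if_neg (by omega)]
                  rw [hc1, hc2, hc3,
                    dProd_split (fun j => G.map (δOH l n (n+1)) (G.xE x j))
                      (by omega : i ≤ l+1) (by omega : l+1 ≤ k-1),
                    dProd_split (fun j => G.map (δOH l n (n+1)) (G.xE x j))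
                      (by omega : i ≤ l-1) (by omega : l-1 ≤ l+1),
                    dProd_succ (fun j => G.map (δOH l n (n+1)) (G.xE x j))
                      (by omega : l-1 ≤ l)]
                  have hs2 := dProd_single (fun j => G.map (δOH l n (n+1)) (G.xE x j)) (l-1)
                  rw [show (l-1)+1 = l by omega] at hs2
                  rw [hs2]
                  simp only [mul_assoc]
                rw [e1, ← G.map_dProd]
                have := G.δ_swap3 (l := l) (i := i) (j := k-2) hl (by omega) (by omega)
                  (by omega) (dProd (G.xE x) i (k-1))
                rw [show k - 2 + 1 = k - 1 by omega] at this
                exact this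
              rw [hA, hB, G.aProd_inv_map, ← G.map_mul,
                ← G.YY_rec (G.xE x) (by omega) (by omega : i + 2 ≤ k)]
            · -- merge point at the top : l = k - 1
              have hlk3 : l = k - 1 := by omega
              have hA : aProd (fun j =>
                    (G.map (mOH i j n) (G.YY n K (G.DM (δOH l n (n+1)) x) j))⁻¹) (i+1) (k-2)
                  = aProd (fun j =>
                      (G.map (δOH l n (n+1))
                        (G.map (mOH i j (n+1)) (G.YY (n+1) k (G.xE x) j)))⁻¹)
                    (i+1) (k-2) := by
                refine aProd_congr _ _ (fun j hj1 hj2 => ?_)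
                rw [ih j (by omega) (by omega), if_pos (by omega : j+1 < l),
                  G.δ_swap1 hl (by omega) (by omega)]
              have hB : G.map (mOH i (k-2) n) (dProd (G.DM (δOH l n (n+1)) x) i (k-2))
                  = G.map (δOH l n (n+1))
                      (G.map (mOH i (k-1) (n+1)) (dProd (G.xE x) i (k-2))) := by
                have e1 : dProd (G.DM (δOH l n (n+1)) x) i (k-2)
                    = dProd (fun j => G.map (δOH l n (n+1)) (G.xE x j)) i (k-2) := by
                  refine dProd_congr _ _ (fun j hj1 hj2 => ?_)
                  rw [G.DM_δ hl x j (by omega), if_pos (by omega : j+1 < l)]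
                rw [e1, ← G.map_dProd]
                have := G.δ_swap3 (l := l) (i := i) (j := k-2) hl (by omega) (by omega)
                  (by omega) (dProd (G.xE x) i (k-2))
                rw [show k - 2 + 1 = k - 1 by omega] at this
                exact this
              rw [hA, hB, G.aProd_inv_map, ← G.map_mul,
                G.YY_rec (G.xE x) (n := n+1) (k := k) (i := i) (by omega) (by omega)]
              have hsucc := aProd_succ (fun j =>
                (G.map (mOH i j (n+1)) (G.YY (n+1) k (G.xE x) j))⁻¹)
                (show i+1 ≤ k-2 by omega)
              rw [show k-2+1 = k-1 by omega] at hsucc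
              have hdsucc := dProd_succ (G.xE x) (show i ≤ k-2 by omega)
              rw [show k-2+1 = k-1 by omega] at hdsucc
              rw [hsucc, hdsucc]
              beta_reduce
              have hYk2 : G.YY (n+1) k (G.xE x) (k-2)
                  = G.map (mOH (k-2) (k-1) (n+1)) (G.xE x (k-2)) := by
                rw [G.YY_rec (G.xE x) (by omega) (by omega : (k-2) + 2 ≤ k)]
                have ha := aProd_empty (fun j =>
                  (G.map (mOH (k-2) j (n+1)) (G.YY (n+1) k (G.xE x) j))⁻¹)
                  (le_refl (k-1))
                rw [show (k-2)+1 = k-1 by omega, ha, one_mul]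
                have hs := dProd_single (G.xE x) (k-2)
                rw [show (k-2)+1 = k-1 by omega] at hs
                rw [hs]
              rw [hYk2]
              simp only [G.map_mul, G.map_inv]
              have hsw := G.δ_swap6 (a := k-2) hl (show i ≤ k-2 by omega)
                (show k-2+1 = l by omega) (G.xE x (k-2))
              rw [show k-2+1 = k-1 by omega] at hsw
              rw [hsw]
              group
      · -- K = k, l ≥ k : subcase A
        have hKk : K = k := by rw [hK, if_neg hlk]
        have hK1 : K - 1 = k - 1 := by omega
        rw [hK1]
        rw [if_pos (by omega : i + 1 < l)]
        have hA : aProd (fun j =>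
              (G.map (mOH i j n) (G.YY n K (G.DM (δOH l n (n+1)) x) j))⁻¹) (i+1) (k-1)
            = aProd (fun j =>
                (G.map (δOH l n (n+1))
                  (G.map (mOH i j (n+1)) (G.YY (n+1) k (G.xE x) j)))⁻¹) (i+1) (k-1) := by
          refine aProd_congr _ _ (fun j hj1 hj2 => ?_)
          rw [ih j (by omega) (by omega), if_pos (by omega : j+1 < l),
            G.δ_swap1 hl (by omega) (by omega)]
        have hB : G.map (mOH i (k-1) n) (dProd (G.DM (δOH l n (n+1)) x) i (k-1))
            = G.map (δOH l n (n+1))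
                (G.map (mOH i (k-1) (n+1)) (dProd (G.xE x) i (k-1))) := by
          have e1 : dProd (G.DM (δOH l n (n+1)) x) i (k-1)
              = dProd (fun j => G.map (δOH l n (n+1)) (G.xE x j)) i (k-1) := by
            refine dProd_congr _ _ (fun j hj1 hj2 => ?_)
            rw [G.DM_δ hl x j (by omega), if_pos (by omega : j+1 < l)]
          rw [e1, ← G.map_dProd, G.δ_swap1 hl (by omega) (by omega)]
        rw [hA, hB, G.aProd_inv_map, ← G.map_mul,
          ← G.YY_rec (G.xE x) (by omega) (by omega : i + 2 ≤ k)]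

theorem natP_δ {l n : ℕ} (hl : l ≤ n+1) : G.NatP (δOH l n (n+1)) := by
  intro x t
  funext i
  rw [G.diagMap_apply, G.DM_δ hl (G.Hn (n+1) x t) (i:ℕ) (by have := i.isLt; omega),
    G.xE_Hn, G.xE_Hn,
    show G.Hn n (G.diagMap (δOH l n (n+1)) x) (t.comp (δOH l n (n+1))) i
      = G.YY n (kOf (t.comp (δOH l n (n+1))))
          (G.xE (G.diagMap (δOH l n (n+1)) x)) (i:ℕ) from rfl,
    kOf_δ t l hl, funext (G.xE_diagMap (δOH l n (n+1)) x),
    G.δ_main hl x (kOf t) _ (kOf_le t) rfl (n+1) (i:ℕ) (by omega) i.isLt, G.map_mul]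

end SGrp
end Paper
namespace Paper

theorem fApp_congr {m n : ℕ} (θ : Fin (m+1) →o Fin (n+1)) {x y : ℕ} (h : min x m = min y m) :
    fApp θ x = fApp θ y := by
  unfold fApp
  exact congrArg (fun p => ((θ p : Fin (n+1)) : ℕ)) (Fin.ext h)

namespace SGrp
variable (G : SGrp)

theorem natP_all_aux : ∀ (s m n : ℕ) (θ : Fin (m+1) →o Fin (n+1)), m + n ≤ s → G.NatP θ := by
  intro s
  induction s with
  | zero =>
    intro m n θ hs
    have hm : m = 0 := by omega
    have hn : n = 0 := by omega
    subst hm; subst hn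
    rw [show θ = OrderHom.id from oh_ext (fun v => by
      rw [fApp_id]
      have := (θ ⟨min v 0, Nat.lt_succ_of_le (Nat.min_le_right _ _)⟩).isLt
      unfold fApp
      omega)]
    exact G.natP_id
  | succ s ih =>
    intro m n θ hs
    by_cases hcol : ∃ a : Fin m, θ a.castSucc = θ a.succ
    · -- collapse case: θ factors through a degeneracy
      obtain ⟨a, ha⟩ := hcol
      rcases m with _ | m'
      · exact absurd a.isLt (by omega)
      · have ham : (a:ℕ) < m' + 1 := a.isLt
        set θ' : Fin (m'+1) →o Fin (n+1) := θ.comp (δOH ((a:ℕ)+1) m' (m'+1)) with hθ'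
        have hfac : θ = θ'.comp (σOH (a:ℕ) (m'+1) m') := by
          refine oh_ext (fun v => ?_)
          rw [fApp_comp, hθ', fApp_comp]
          by_cases hu : min v (m'+1) = (a:ℕ)+1
          · have hA : fApp (δOH ((a:ℕ)+1) m' (m'+1)) (fApp (σOH (a:ℕ) (m'+1) m') v)
                = (a:ℕ) := by
              rw [fApp_δOH, fApp_σOH]
              split_ifs <;> omega
            rw [hA]
            have h1 : fApp θ v = fApp θ ((a:ℕ)+1) := fApp_congr θ (by omega)
            have h2 : fApp θ ((a:ℕ)+1) = ((θ a.succ : Fin (n+1)) : ℕ) := by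
              rw [← fApp_coe θ a.succ, Fin.val_succ]
            have h3 : fApp θ ((a:ℕ)) = ((θ a.castSucc : Fin (n+1)) : ℕ) := by
              rw [← fApp_coe θ a.castSucc, Fin.coe_castSucc]
            rw [h1, h2, ← ha, ← h3]
          · have hA : min (fApp (δOH ((a:ℕ)+1) m' (m'+1)) (fApp (σOH (a:ℕ) (m'+1) m') v))
                (m'+1) = min v (m'+1) := by
              rw [fApp_δOH, fApp_σOH]
              split_ifs <;> omega
            exact (fApp_congr θ hA).symm
        rw [hfac]
        exact G.natP_comp (ih m' n θ' (by omega)) (G.natP_σ (by omega : (a:ℕ) ≤ m'))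
    · -- no collapse: θ is strictly monotone on adjacent vertices
      push_neg at hcol
      have hstep : ∀ a : Fin m, ((θ a.castSucc : Fin (n+1)) : ℕ) < θ a.succ := by
        intro a
        have hle := θ.monotone (show a.castSucc ≤ a.succ from by
          rw [Fin.le_def, Fin.coe_castSucc, Fin.val_succ]; omega)
        exact lt_of_le_of_ne (Fin.le_def.mp hle) (fun hv => hcol a (Fin.ext hv))
      have hstep' : ∀ a : ℕ, a < m → fApp θ a < fApp θ (a+1) := by
        intro a haa
        have h2 : fApp θ ((a:ℕ)+1) = ((θ (Fin.succ ⟨a, haa⟩) : Fin (n+1)) : ℕ) := by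
          rw [← fApp_coe θ (Fin.succ ⟨a, haa⟩), Fin.val_succ]
        have h3 : fApp θ ((a:ℕ)) = ((θ (Fin.castSucc ⟨a, haa⟩) : Fin (n+1)) : ℕ) := by
          rw [← fApp_coe θ (Fin.castSucc ⟨a, haa⟩), Fin.coe_castSucc]
        rw [h2, h3]
        exact hstep ⟨a, haa⟩
      by_cases hgap : ∃ l : Fin (n+1), ∀ p : Fin (m+1), θ p ≠ l
      · obtain ⟨l, hl⟩ := hgap
        have hlv : ∀ p : Fin (m+1), ((θ p : Fin (n+1)) : ℕ) ≠ (l:ℕ) :=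
          fun p hv => hl p (Fin.ext hv)
        rcases n with _ | n''
        · exact absurd (hl ⟨0, by omega⟩) (by
            intro hne
            exact hne (Fin.ext (by omega)))
        · set θ'' : Fin (m+1) →o Fin (n''+1) :=
            ⟨fun v => ⟨if ((θ v : Fin (n''+2)) : ℕ) < (l:ℕ) then ((θ v : Fin (n''+2)) : ℕ)
                else ((θ v : Fin (n''+2)) : ℕ) - 1, by
              have h1 := (θ v).isLt
              have h2 := hlv v
              have h3 := l.isLt
              split_ifs <;> omega⟩, by
              intro v w hvw
              have h1 := Fin.le_def.mp (θ.monotone hvw)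
              have h2 := hlv v
              have h3 := hlv w
              simp only [Fin.mk_le_mk]
              split_ifs <;> omega⟩ with hθ''
          have hfac : θ = (δOH (l:ℕ) n'' (n''+1)).comp θ'' := by
            refine oh_ext (fun v => ?_)
            rw [fApp_comp]
            have hA : fApp θ'' v = (if fApp θ v < (l:ℕ) then fApp θ v else fApp θ v - 1) := rfl
            rw [hA, fApp_δOH]
            have h1 := fApp_le θ v
            have h2 := hlv (⟨min v m, Nat.lt_succ_of_le (Nat.min_le_right _ _)⟩ : Fin (m+1))
            have h3 : fApp θ v ≠ (l:ℕ) := h2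
            have h4 := l.isLt
            split_ifs <;> omega
          rw [hfac]
          exact G.natP_comp (G.natP_δ (by omega : (l:ℕ) ≤ n''+1)) (ih m n'' θ'' (by omega))
      · -- θ is surjective and strictly monotone, hence the identity
        push_neg at hgap
        have hsurj : Function.Surjective θ := fun l => hgap l
        have hmn : n ≤ m := by
          have := Fintype.card_le_of_surjective θ hsurj
          simpa using this
        have hge : ∀ j : ℕ, j ≤ m → j ≤ fApp θ j := by
          intro j
          induction j with
          | zero => intro _; omega
          | succ j ihj =>
            intro hj
            have := hstep' j (by omega)
            have := ihj (by omega)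
            omega
        have hmln : m ≤ n := by
          have := hge m le_rfl
          have := fApp_le θ m
          omega
        have hmeq : m = n := by omega
        subst hmeq
        have hle : ∀ j : ℕ, j ≤ m → fApp θ (m - j) ≤ m - j := by
          intro j
          induction j with
          | zero =>
            intro _
            have := fApp_le θ (m - 0)
            omega
          | succ j ihj =>
            intro hj
            have h1 := ihj (by omega)
            have h2 := hstep' (m - (j+1)) (by omega)
            have h3 : m - (j+1) + 1 = m - j := by omega
            rw [h3] at h2
            omega
        have hid : θ = OrderHom.id := by
          refine oh_ext (fun v => ?_)
          rw [fApp_id]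
          have h1 := hge (min v m) (by omega)
          have h2 := hle (m - min v m) (by omega)
          have h3 : m - (m - min v m) = min v m := by omega
          rw [h3] at h2
          have h4 : fApp θ (min v m) = fApp θ v := fApp_congr θ (by omega)
          omega
        rw [hid]
        exact G.natP_id

theorem natP_all {m n : ℕ} (θ : Fin (m+1) →o Fin (n+1)) : G.NatP θ :=
  G.natP_all_aux (m+n) m n θ le_rfl

end SGrp
end Paper

open Paper Paper.SGrp in
/-- `W̄G` and `Diag NG` are simplicially homotopy equivalent, via the mutually
inverse homotopy equivalences `D_G` and `S_G`: `S_G D_G = id` on `W̄G` (hence homotopic to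
the identity via a simplicial homotopy `K`) and `D_G S_G` is simplicially homotopic to the
identity of `Diag NG` via a simplicial homotopy `H`. -/
theorem stmt_18 (G : SGrp) :
    (∀ (n : ℕ) (x : G.WbarN n), G.DGn n (G.SGn n x) = x) ∧
    (∃ H : ∀ n : ℕ, (Fin n → G.obj n) → (Fin (n+1) →o Fin 2) → (Fin n → G.obj n),
      (∀ {m n : ℕ} (θ : Fin (m+1) →o Fin (n+1)) (x : Fin n → G.obj n) (t : Fin (n+1) →o Fin 2),
        G.diagMap θ (H n x t) = H m (G.diagMap θ x) (t.comp θ)) ∧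
      (∀ (n : ℕ) (x : Fin n → G.obj n), H n x (τOH n 0) = G.SGn n (G.DGn n x)) ∧
      (∀ (n : ℕ) (x : Fin n → G.obj n), H n x (τOH n (n+1)) = x)) ∧
    (∃ K : ∀ n : ℕ, G.WbarN n → (Fin (n+1) →o Fin 2) → G.WbarN n,
      (∀ {m n : ℕ} (θ : Fin (m+1) →o Fin (n+1)) (x : G.WbarN n) (t : Fin (n+1) →o Fin 2),
        G.wbarMap θ (K n x t) = K m (G.wbarMap θ x) (t.comp θ)) ∧
      (∀ (n : ℕ) (x : G.WbarN n), K n x (τOH n 0) = G.DGn n (G.SGn n x)) ∧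
      (∀ (n : ℕ) (x : G.WbarN n), K n x (τOH n (n+1)) = x)) := by
  refine ⟨fun n x => G.DGn_SGn x,
    ⟨fun n => G.Hn n, ?_, fun n x => G.H_end0 x, fun n x => G.H_end1 x⟩,
    ⟨fun n x t => x, ?_, fun n x => (G.DGn_SGn x).symm, fun n x => rfl⟩⟩
  · intro m n θ x t
    exact G.natP_all θ x t
  · intro m n θ x t
    rfl
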